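/- arXiv:2003.08188 — 5 statements merged into one kernel-verified Lean document; each statement's English description precedes it below -/
import Mathlib

section
/- Let α > 0 and λ ∈ ℝ. Then for every t > 0, the function t ↦ E_{α,1}(−λ t^α) is differentiable and (d/dt) E_{α,1}(−λ t^α) = −λ t^{α−1} E_{α,α}(−λ t^α). -/
open Real Set

lemma gamma_lower {x s : ℝ} (hx : 1 ≤ x) (hs : 2 ≤ s) :
    x ^ (s - 1) / Real.exp x ≤ Real.Gamma (s + 1) := by
  set k := ⌊s⌋₊ with hk
  have hx0 : (0:ℝ) ≤ x := by linarith
  have hk2 : 2 ≤ k := Nat.le_floor (by exact_mod_cast hs)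
  have hk2' : (2:ℝ) ≤ k := by exact_mod_cast hk2
  have hks : (k:ℝ) ≤ s := Nat.floor_le (by linarith)
  have hsk : s < k + 1 := Nat.lt_floor_add_one s
  have h1 : x ^ (s-1) ≤ x ^ (k:ℝ) :=
    Real.rpow_le_rpow_of_exponent_le hx (by linarith)
  have h2 : x ^ (k:ℝ) = x ^ k := Real.rpow_natCast x k
  have hfac : (0:ℝ) < (Nat.factorial k : ℝ) := by positivity
  have h3 : x ^ k / Real.exp x ≤ (Nat.factorial k : ℝ) := by
    have h := Real.pow_div_factorial_le_exp x hx0 k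
    rw [div_le_iff₀ hfac] at h
    rw [div_le_iff₀ (Real.exp_pos x)]
    linarith
  have h4 : (Nat.factorial k : ℝ) = Real.Gamma ((k:ℝ) + 1) :=
    (Real.Gamma_nat_eq_factorial k).symm
  have h5 : Real.Gamma ((k:ℝ) + 1) ≤ Real.Gamma (s + 1) := by
    refine Real.Gamma_strictMonoOn_Ici.monotoneOn ?_ ?_ (by linarith)
    · exact mem_Ici.2 (by linarith)
    · exact mem_Ici.2 (by linarith)
  calc x ^ (s-1) / Real.exp x ≤ x ^ (k:ℝ) / Real.exp x := by
        gcongr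
      _ = x ^ k / Real.exp x := by rw [h2]
      _ ≤ (Nat.factorial k : ℝ) := h3
      _ = Real.Gamma ((k:ℝ) + 1) := h4
      _ ≤ Real.Gamma (s + 1) := h5

lemma aux_summable{a : ℝ} (ha : 0 < a) {c : ℝ} (hc : 0 ≤ c) :
    Summable (fun n : ℕ => ((n : ℝ) + 1) * c ^ n / Real.Gamma (a * n + 1)) := by
  set x : ℝ := (4 * (c + 1)) ^ a⁻¹ with hxdef
  have hb1 : (1:ℝ) ≤ 4 * (c + 1) := by linarith
  have hx1 : 1 ≤ x := by
    calc (1:ℝ) = (1:ℝ) ^ a⁻¹ := (Real.one_rpow _).symm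
      _ ≤ x := Real.rpow_le_rpow zero_le_one hb1 (by positivity)
  have hx0 : (0:ℝ) < x := by linarith
  have hxa : x ^ a = 4 * (c + 1) := by
    rw [hxdef, ← Real.rpow_mul (by linarith), inv_mul_cancel₀ ha.ne', Real.rpow_one]
  set N := ⌈2 / a⌉₊ with hN
  have hNa : 2 ≤ a * N := by
    have h1 : 2 / a ≤ (N : ℝ) := Nat.le_ceil _
    calc (2:ℝ) = a * (2 / a) := by field_simp
      _ ≤ a * N := by gcongr
  -- the summable majorant
  have hg : Summable (fun m : ℕ => (Real.exp x * x) * (((m:ℝ) + 1) * (1/2 : ℝ) ^ m)) := by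
    apply Summable.mul_left
    have h1 := summable_pow_mul_geometric_of_norm_lt_one (R := ℝ) 1
      (r := (1/2 : ℝ)) (by simp only [Real.norm_eq_abs]; rw [abs_of_pos] <;> norm_num)
    have h2 : Summable (fun m : ℕ => ((1:ℝ)/2) ^ m) :=
      summable_geometric_of_lt_one (by norm_num) (by norm_num)
    simpa [add_mul, pow_one] using h1.add h2
  rw [← summable_nat_add_iff N]
  apply Summable.of_nonneg_of_le ?_ ?_ ((summable_nat_add_iff N).2 hg)
  · intro n
    have : 0 < Real.Gamma (a * (n + N : ℕ) + 1) :=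
      Real.Gamma_pos_of_pos (by positivity)
    positivity
  · intro n
    set m : ℕ := n + N with hm
    have hm2 : 2 ≤ a * m := by
      calc (2:ℝ) ≤ a * N := hNa
        _ ≤ a * m := by
          have : (N:ℝ) ≤ m := by exact_mod_cast Nat.le_add_left N n
          gcongr
    have hG := gamma_lower hx1 hm2
    have hGpos : (0:ℝ) < x ^ (a * m - 1) / Real.exp x := by positivity
    have hxm : x ^ (a * (m:ℝ) - 1) = (4 * (c + 1)) ^ m / x := by
      rw [Real.rpow_sub hx0, Real.rpow_one, Real.rpow_mul hx0.le, Real.rpow_natCast, hxa]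
    have key : ((m:ℝ) + 1) * c ^ m / Real.Gamma (a * m + 1)
        ≤ ((m:ℝ) + 1) * c ^ m / (x ^ (a * (m:ℝ) - 1) / Real.exp x) := by
      gcongr
    refine key.trans ?_
    rw [hxm]
    have h44 : (0:ℝ) < (4 * (c + 1)) ^ m := by positivity
    have heq : ((m:ℝ) + 1) * c ^ m / ((4 * (c + 1)) ^ m / x / Real.exp x)
        = (Real.exp x * x) * (((m:ℝ) + 1) * (c ^ m / (4 * (c + 1)) ^ m)) := by
      field_simp
    rw [heq, ← div_pow]
    have hle : c / (4 * (c + 1)) ≤ 1/2 := by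
      rw [div_le_div_iff₀ (by linarith) (by norm_num)]; linarith
    gcongr

/-- The (real) Mittag-Leffler function `E_{α,β}(x) = ∑_{n=0}^∞ xⁿ/Γ(αn+β)`. -/
noncomputable def mlE (a b x : ℝ) : ℝ :=
  ∑' n : ℕ, x ^ n / Real.Gamma (a * n + b)

/-- For `α > 0`, `λ ∈ ℝ` and `t > 0`, the function `t ↦ E_{α,1}(-λ t^α)` is differentiable and
`(d/dt) E_{α,1}(-λ t^α) = -λ t^(α-1) E_{α,α}(-λ t^α)`. -/
theorem deriv_mlE_one (a l : ℝ) (ha : 0 < a) :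
    ∀ t : ℝ, 0 < t →
      HasDerivAt (fun s : ℝ => mlE a 1 (-l * s ^ a))
        (-l * t ^ (a - 1) * mlE a a (-l * t ^ a)) t := by
  intro t ht
  set M : ℝ := max 1 (t + 1) with hMdef
  have hM1 : (1:ℝ) ≤ M := le_max_left _ _
  have hM0 : (0:ℝ) < M := by linarith
  have htM : t ≤ M := le_trans (by linarith) (le_max_right _ _)
  set c : ℝ := |l| * M ^ a with hcdef
  have hc0 : (0:ℝ) ≤ c := by positivity
  have hGpos : ∀ n : ℕ, 0 < Real.Gamma (a * n + 1) := fun n =>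
    Real.Gamma_pos_of_pos (by positivity)
  set f : ℕ → ℝ → ℝ := fun n s => (-l * s ^ a) ^ n / Real.Gamma (a * n + 1) with hfdef
  set f' : ℕ → ℝ → ℝ := fun n s =>
    ((-l) ^ n / Real.Gamma (a * n + 1)) * ((a * n) * s ^ (a * n - 1)) with hf'def
  set u : ℕ → ℝ := fun n =>
    (2 * a / t) * (((n : ℝ) + 1) * c ^ n / Real.Gamma (a * n + 1)) with hudef
  have hu_sum : Summable u := (aux_summable ha hc0).mul_left _
  have htS : t ∈ Set.Ioo (t/2) (t+1) := ⟨by linarith, by linarith⟩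
  -- each term differentiable on the interval
  have hderiv : ∀ (n : ℕ), ∀ s ∈ Set.Ioo (t/2) (t+1), HasDerivAt (f n) (f' n s) s := by
    intro n s hs
    have hs0 : 0 < s := lt_trans (by linarith) hs.1
    have h1 : HasDerivAt (fun y : ℝ => y ^ (a * (n:ℝ)))
        ((a * n) * s ^ (a * (n:ℝ) - 1)) s :=
      Real.hasDerivAt_rpow_const (Or.inl hs0.ne')
    have h2 := h1.const_mul ((-l) ^ n / Real.Gamma (a * n + 1))
    refine HasDerivAt.congr_of_eventuallyEq h2 ?_
    filter_upwards [eventually_gt_nhds hs0] with y hy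
    have hpow : (-l * y ^ a) ^ n = (-l) ^ n * y ^ (a * (n:ℝ)) := by
      rw [Real.rpow_mul hy.le, Real.rpow_natCast]
      ring
    simp only [hfdef, hpow]
    ring
  -- uniform bound on derivatives
  have hbound : ∀ (n : ℕ), ∀ s ∈ Set.Ioo (t/2) (t+1), ‖f' n s‖ ≤ u n := by
    intro n s hs
    have hs0 : 0 < s := lt_trans (by linarith) hs.1
    have hsM : s ≤ M := le_trans hs.2.le (le_max_right _ _)
    have hMA : M ^ (a * (n:ℝ)) = (M ^ a) ^ n := by
      rw [Real.rpow_mul hM0.le, Real.rpow_natCast]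
    have hsub : s ^ (a * (n:ℝ) - 1) = s ^ (a * (n:ℝ)) / s := by
      rw [Real.rpow_sub hs0, Real.rpow_one]
    have hnn : (0:ℝ) ≤ (a * n) * s ^ (a * (n:ℝ) - 1) :=
      mul_nonneg (by positivity) (Real.rpow_nonneg hs0.le _)
    have hnorm : ‖f' n s‖ = (|l| ^ n / Real.Gamma (a * n + 1))
        * ((a * n) * s ^ (a * (n:ℝ) - 1)) := by
      rw [Real.norm_eq_abs, abs_mul, abs_div, abs_pow, abs_neg,
        abs_of_pos (hGpos n), abs_of_nonneg hnn]
    rw [hnorm, hsub]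
    have hstep : s ^ (a * (n:ℝ)) / s ≤ (M ^ a) ^ n / (t/2) := by
      rw [← hMA]
      apply div_le_div₀ (by positivity) ?_ (by linarith) hs.1.le
      exact Real.rpow_le_rpow hs0.le hsM (by positivity)
    calc (|l| ^ n / Real.Gamma (a * n + 1)) * ((a * n) * (s ^ (a * (n:ℝ)) / s))
        ≤ (|l| ^ n / Real.Gamma (a * n + 1)) * ((a * n) * ((M ^ a) ^ n / (t/2))) := by
          gcongr
      _ = (2 * a / t) * ((n : ℝ) * (|l| ^ n * (M ^ a) ^ n) / Real.Gamma (a * n + 1)) := by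
          field_simp
      _ ≤ (2 * a / t) * (((n : ℝ) + 1) * (|l| ^ n * (M ^ a) ^ n) / Real.Gamma (a * n + 1)) := by
          gcongr
          · linarith
      _ = (2 * a / t) * (((n : ℝ) + 1) * c ^ n / Real.Gamma (a * n + 1)) := by
          rw [hcdef, mul_pow]
      _ = u n := rfl
  -- summability at the base point
  have hsum0 : Summable (fun n => f n t) := by
    apply Summable.of_norm_bounded ((aux_summable ha hc0))
    intro n
    have hta : |(-l * t ^ a)| ≤ c := by
      rw [abs_mul, abs_neg]
      have : |t ^ a| = t ^ a := abs_of_pos (Real.rpow_pos_of_pos ht a)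
      rw [this, hcdef]
      gcongr
    calc ‖f n t‖ = |(-l * t ^ a)| ^ n / Real.Gamma (a * n + 1) := by
          rw [Real.norm_eq_abs, abs_div, abs_pow, abs_of_pos (hGpos n)]
      _ ≤ c ^ n / Real.Gamma (a * n + 1) := by
          gcongr
      _ ≤ ((n : ℝ) + 1) * c ^ n / Real.Gamma (a * n + 1) := by
          gcongr
          nlinarith [pow_nonneg hc0 n, Nat.cast_nonneg (α := ℝ) n]
  have main : HasDerivAt (fun z => ∑' n, f n z) (∑' n, f' n t) t :=
    hasDerivAt_tsum_of_isPreconnected hu_sum isOpen_Ioo isPreconnected_Ioo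
      hderiv hbound htS hsum0 htS
  -- identify the function
  have hfun : (fun s : ℝ => mlE a 1 (-l * s ^ a)) = fun z => ∑' n, f n z := by
    funext z
    simp only [mlE, hfdef]
  -- identify the derivative value
  have hsum' : Summable (fun n => f' n t) :=
    Summable.of_norm_bounded hu_sum (fun n => hbound n t htS)
  have hshift : ∀ n : ℕ, f' (n+1) t
      = (-l * t ^ (a-1)) * ((-l * t ^ a) ^ n / Real.Gamma (a * n + a)) := by
    intro n
    have hA : (0:ℝ) < a * ((n:ℝ) + 1) := by positivity
    have hcast : ((n+1 : ℕ) : ℝ) = (n : ℝ) + 1 := by push_cast; ring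
    have harg : a * ((n:ℝ) + 1) = a * n + a := by ring
    have hGpos2 : (0:ℝ) < Real.Gamma (a * (n:ℝ) + a) :=
      Real.Gamma_pos_of_pos (by positivity)
    have hgamma : Real.Gamma ((a * (n:ℝ) + a) + 1)
        = (a * (n:ℝ) + a) * Real.Gamma (a * (n:ℝ) + a) :=
      Real.Gamma_add_one (by positivity)
    have htan : t ^ (a * (n:ℝ)) = (t ^ a) ^ n := by
      rw [Real.rpow_mul ht.le, Real.rpow_natCast]
    have hne1 : (a * (n:ℝ) + a) ≠ 0 := by positivity
    have hne2 : Real.Gamma (a * (n:ℝ) + a) ≠ 0 := hGpos2.ne'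
    simp only [hf'def, hcast, harg]
    rw [hgamma]
    rw [show a * (n:ℝ) + a - 1 = (a - 1) + a * (n:ℝ) from by ring]
    rw [Real.rpow_add ht, htan]
    field_simp
    ring
  have hval : (∑' n, f' n t) = -l * t ^ (a - 1) * mlE a a (-l * t ^ a) := by
    rw [Summable.tsum_eq_zero_add hsum']
    have h0 : f' 0 t = 0 := by simp [hf'def]
    rw [h0, zero_add]
    calc (∑' n : ℕ, f' (n+1) t)
        = ∑' n : ℕ, (-l * t ^ (a-1)) * ((-l * t ^ a) ^ n / Real.Gamma (a * n + a)) :=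
          tsum_congr hshift
      _ = (-l * t ^ (a-1)) * ∑' n : ℕ, ((-l * t ^ a) ^ n / Real.Gamma (a * n + a)) :=
          tsum_mul_left
      _ = -l * t ^ (a - 1) * mlE a a (-l * t ^ a) := by rw [mlE]
  rw [hfun, ← hval]
  exact main
end

section
/- Let 0 ≤ ν ≤ 1, 0 < μ < 1, set β := μ + ν(1−μ), let ω ∈ ℝ, and define u(t) := t^{β−1} E_{μ,β}(−ω t^μ) for t > 0. Then: (i) I^{(1−ν)(1−μ)} u(t) = E_{μ,1}(−ω t^μ) for every t > 0, so that lim_{t→0⁺} I^{(1−ν)(1−μ)} u(t) = 1; and (ii) the Hilfer fractional derivative of u satisfies D^{μ,ν} u(t) = −ω t^{β−1} E_{μ,β}(−ω t^μ) = −ω u(t) for every t > 0. -/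
open Real Filter Topology Set MeasureTheory intervalIntegral


/-- The (left) Riemann-Liouville fractional integral
`(I^α f)(t) = (1/Γ(α)) ∫₀ᵗ (t-τ)^(α-1) f(τ) dτ`, with `I⁰ f = f`. -/
noncomputable def rlI (a : ℝ) (f : ℝ → ℝ) (t : ℝ) : ℝ :=
  if a = 0 then f t
  else (Real.Gamma a)⁻¹ * ∫ τ in (0:ℝ)..t, (t - τ) ^ (a - 1) * f τ

/-- The Hilfer fractional derivative of order `(μ,ν)`:
`(D^{μ,ν} u)(t) = I^{ν(1-μ)}[(d/dt)(I^{(1-ν)(1-μ)} u)](t)`. -/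
noncomputable def hilferD (μ ν : ℝ) (u : ℝ → ℝ) (t : ℝ) : ℝ :=
  rlI (ν * (1 - μ)) (deriv (rlI ((1 - ν) * (1 - μ)) u)) t

lemma summable_ml_abs {μ b : ℝ} (hμ : 0 < μ) (hb : 0 < b) {x : ℝ} (hx : 0 ≤ x) :
    Summable (fun n : ℕ => x ^ n / Real.Gamma (μ * n + b)) := by
  have hΓpos : ∀ n : ℕ, 0 < Real.Gamma (μ * n + b) := fun n =>
    Real.Gamma_pos_of_pos (by positivity)
  set X : ℝ := 2 * x with hX
  have hX0 : 0 ≤ X := by positivity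
  set K : ℝ := max 1 (X ^ (2 / μ)) with hK
  have hK1 : 1 ≤ K := le_max_left _ _
  -- p n tends to atTop
  have hp : Tendsto (fun n : ℕ => ⌊μ * n + b⌋₊ - 1) atTop atTop := by
    have h1 : Tendsto (fun n : ℕ => μ * n + b) atTop atTop := by
      exact tendsto_atTop_add_const_right _ b
        (Tendsto.const_mul_atTop hμ tendsto_natCast_atTop_atTop)
    exact (tendsto_sub_atTop_nat 1).comp (tendsto_nat_floor_atTop.comp h1)
  have hKfac : Tendsto (fun n : ℕ => K ^ (⌊μ * n + b⌋₊ - 1) / Nat.factorial (⌊μ * n + b⌋₊ - 1)) atTop (𝓝 0) :=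
    (FloorSemiring.tendsto_pow_div_factorial_atTop K).comp hp
  have hev : ∀ᶠ n : ℕ in atTop, X ^ n / Real.Gamma (μ * n + b) ≤ 1 := by
    have h4 : ∀ᶠ n : ℕ in atTop, (4 : ℝ) ≤ μ * n + b := by
      have h1 : Tendsto (fun n : ℕ => μ * n + b) atTop atTop := by
        exact tendsto_atTop_add_const_right _ b
          (Tendsto.const_mul_atTop hμ tendsto_natCast_atTop_atTop)
      exact h1.eventually_ge_atTop 4
    have h5 : ∀ᶠ n : ℕ in atTop, 2 - b ≤ μ * n / 2 := by
      have h1 : Tendsto (fun n : ℕ => μ * n / 2) atTop atTop := by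
        exact Tendsto.atTop_div_const two_pos
          (Tendsto.const_mul_atTop hμ tendsto_natCast_atTop_atTop)
      exact h1.eventually_ge_atTop _
    have h6 : ∀ᶠ n : ℕ in atTop,
        K ^ (⌊μ * n + b⌋₊ - 1) / Nat.factorial (⌊μ * n + b⌋₊ - 1) < 1 :=
      hKfac.eventually_lt_const one_pos
    filter_upwards [h4, h5, h6] with n h4 h5 h6
    set m : ℕ := ⌊μ * n + b⌋₊ with hm
    set p : ℕ := m - 1 with hp'
    have hmb : (m : ℝ) ≤ μ * n + b := Nat.floor_le (by positivity)
    have hbm : μ * n + b < m + 1 := Nat.lt_floor_add_one _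
    have hm4 : 4 ≤ m := by
      have := Nat.le_floor (α := ℝ) (n := 4) (by exact_mod_cast h4)
      exact_mod_cast this
    have hpm : (p : ℝ) = (m : ℝ) - 1 := by
      have : 1 ≤ m := by omega
      push_cast [hp', this]; ring
    -- Γ(μn+b) ≥ Γ(m) = (m-1) ! = Nat.factorial p
    have hΓmono : Real.Gamma (m : ℝ) ≤ Real.Gamma (μ * n + b) := by
      apply Real.Gamma_strictMonoOn_Ici.monotoneOn
      · exact mem_Ici.2 (by exact_mod_cast by omega : (2:ℝ) ≤ m)
      · exact mem_Ici.2 (by linarith [hmb])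
      · exact hmb
    have hΓm : Real.Gamma (m : ℝ) = Nat.factorial p := by
      have : (m : ℝ) = (p : ℝ) + 1 := by rw [hpm]; ring
      rw [this, Real.Gamma_nat_eq_factorial]
    -- X^n ≤ K^p
    have hnp : (n : ℝ) ≤ (2 / μ) * p := by
      rw [hpm]
      have : μ * n / 2 ≤ (m : ℝ) - 1 := by linarith
      rw [div_mul_eq_mul_div, le_div_iff₀ hμ]
      linarith [this]
    have hXn : X ^ n ≤ K ^ p := by
      rcases le_or_gt X 1 with hX1 | hX1
      · calc X ^ n ≤ 1 ^ n := pow_le_pow_left₀ hX0 hX1 n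
          _ = 1 := one_pow n
          _ ≤ K ^ p := one_le_pow₀ hK1
      · have h1X : 1 ≤ X := hX1.le
        calc X ^ n = X ^ (n : ℝ) := by rw [Real.rpow_natCast]
          _ ≤ X ^ ((2 / μ) * p) := Real.rpow_le_rpow_of_exponent_le h1X hnp
          _ = (X ^ (2 / μ)) ^ (p : ℝ) := by rw [Real.rpow_mul (by linarith : (0:ℝ) ≤ X)]
          _ ≤ K ^ (p : ℝ) := Real.rpow_le_rpow (by positivity) (le_max_right _ _) (by positivity)
          _ = K ^ p := Real.rpow_natCast K p
    calc X ^ n / Real.Gamma (μ * n + b) ≤ K ^ p / Nat.factorial p := by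
          apply div_le_div₀ (by positivity) hXn _ _
          · exact_mod_cast Nat.factorial_pos p
          · rw [← hΓm]; exact hΓmono
      _ ≤ 1 := h6.le
  obtain ⟨N, hN⟩ := eventually_atTop.mp hev
  rw [← summable_nat_add_iff N]
  refine Summable.of_nonneg_of_le (fun n => by positivity) (fun n => ?_)
    ((summable_geometric_of_lt_one (by norm_num : (0:ℝ) ≤ 1/2) (by norm_num : (1/2:ℝ) < 1)).mul_left ((1/2 : ℝ) ^ N))
  · have h1 := hN (n + N) (by omega)
    have hxX : x ^ (n + N) = (1/2 : ℝ) ^ (n + N) * X ^ (n + N) := by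
      rw [hX, ← mul_pow]; ring_nf
    calc x ^ (n + N) / Real.Gamma (μ * ↑(n + N) + b)
        = (1/2 : ℝ) ^ (n + N) * (X ^ (n + N) / Real.Gamma (μ * ↑(n + N) + b)) := by
          rw [hxX]; ring
      _ ≤ (1/2 : ℝ) ^ (n + N) * 1 := mul_le_mul_of_nonneg_left h1 (by positivity)
      _ = (1/2 : ℝ) ^ N * (1/2) ^ n := by rw [mul_one, pow_add]; ring


lemma summable_ml {μ b : ℝ} (hμ : 0 < μ) (hb : 0 < b) (x : ℝ) :
    Summable (fun n : ℕ => x ^ n / Real.Gamma (μ * n + b)) := by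
  refine Summable.of_norm ?_
  have h := summable_ml_abs hμ hb (abs_nonneg x)
  convert h using 2 with n
  rw [Real.norm_eq_abs, abs_div, abs_pow, abs_of_pos (Real.Gamma_pos_of_pos (by positivity))]

lemma mlE_continuousAt {μ b : ℝ} (hμ : 0 < μ) (hb : 0 < b) (y : ℝ) :
    ContinuousAt (mlE μ b) y := by
  have h : ContinuousOn (mlE μ b) (Metric.ball 0 (|y| + 1)) := by
    unfold mlE
    refine continuousOn_tsum (u := fun n : ℕ => (|y| + 1) ^ n / Real.Gamma (μ * n + b))
      (fun n => ((continuous_pow n).div_const _).continuousOn)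
      (summable_ml_abs hμ hb (by positivity)) ?_
    intro n z hz
    rw [Metric.mem_ball, Real.dist_eq, sub_zero] at hz
    rw [Real.norm_eq_abs, abs_div, abs_pow, abs_of_pos (Real.Gamma_pos_of_pos (by positivity))]
    rw [div_le_div_iff_of_pos_right (Real.Gamma_pos_of_pos (by positivity))]
    exact pow_le_pow_left₀ (abs_nonneg z) hz.le n
  exact h.continuousAt (Metric.isOpen_ball.mem_nhds (by simp [Real.dist_eq]))

lemma mlE_zero {μ b : ℝ} : mlE μ b 0 = 1 / Real.Gamma b := by
  unfold mlE
  rw [tsum_eq_single 0 (fun n hn => by simp [zero_pow hn])]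
  simp

lemma mlE_succ {μ b : ℝ} (hμ : 0 < μ) (hb : 0 < b) (y : ℝ) :
    mlE μ b y = 1 / Real.Gamma b + y * mlE μ (b + μ) y := by
  unfold mlE
  rw [Summable.tsum_eq_zero_add (summable_ml hμ hb y)]
  congr 1
  · simp
  · rw [← tsum_mul_left]
    congr 1 with n
    have : μ * (↑(n + 1) : ℝ) + b = μ * n + (b + μ) := by push_cast; ring
    rw [this, pow_succ]
    ring


lemma beta_integrable {a c t : ℝ} (ha : 0 < a) (hc : 0 < c) (ht : 0 < t) :
    IntervalIntegrable (fun τ => (t - τ) ^ (a - 1) * τ ^ (c - 1)) volume 0 t := by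
  have h1 : IntervalIntegrable (fun τ => (t - τ) ^ (a - 1) * τ ^ (c - 1)) volume 0 (t/2) := by
    have hint : IntervalIntegrable (fun τ : ℝ => τ ^ (c - 1)) volume 0 (t/2) :=
      intervalIntegral.intervalIntegrable_rpow' (by linarith)
    have hcont : ContinuousOn (fun τ : ℝ => (t - τ) ^ (a - 1)) (uIcc 0 (t/2)) := by
      apply ContinuousOn.rpow_const (by fun_prop)
      intro x hx
      rw [uIcc_of_le (by linarith)] at hx
      left
      have := hx.2
      intro h
      have : t = x := by linarith [sub_eq_zero.mp h]
      linarith [hx.2, ht]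
    exact hint.continuousOn_mul hcont
  have h2 : IntervalIntegrable (fun τ => (t - τ) ^ (a - 1) * τ ^ (c - 1)) volume (t/2) t := by
    have hint : IntervalIntegrable (fun τ : ℝ => (t - τ) ^ (a - 1)) volume (t/2) t := by
      have : IntervalIntegrable (fun τ : ℝ => τ ^ (a - 1)) volume (t - t/2) (t - t) :=
        intervalIntegral.intervalIntegrable_rpow' (by linarith)
      simpa using this.comp_sub_left t
    have hcont : ContinuousOn (fun τ : ℝ => τ ^ (c - 1)) (uIcc (t/2) t) := by
      apply ContinuousOn.rpow_const (by fun_prop)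
      intro x hx
      rw [uIcc_of_le (by linarith)] at hx
      left
      have := hx.1
      exact (by linarith : (0:ℝ) < x).ne'
    exact hint.mul_continuousOn hcont
  exact h1.trans h2

lemma beta_eval {a c t : ℝ} (ha : 0 < a) (hc : 0 < c) (ht : 0 < t) :
    ∫ τ in (0:ℝ)..t, (t - τ) ^ (a - 1) * τ ^ (c - 1) =
      Real.Gamma a * Real.Gamma c / Real.Gamma (a + c) * t ^ (a + c - 1) := by
  have h1 := Complex.betaIntegral_scaled (c : ℂ) (a : ℂ) ht
  have hca : (0:ℝ) < c + a := by linarith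
  have hΓca : Complex.Gamma ((c:ℂ) + a) = ((Real.Gamma (c + a) : ℝ) : ℂ) := by
    rw [← Complex.ofReal_add, Complex.Gamma_ofReal]
  have hΓne : Complex.Gamma ((c:ℂ) + a) ≠ 0 := by
    rw [hΓca]
    exact_mod_cast (Real.Gamma_pos_of_pos hca).ne'
  have h2 : Complex.betaIntegral c a =
      ((Real.Gamma c * Real.Gamma a / Real.Gamma (c + a) : ℝ) : ℂ) := by
    have h := Complex.Gamma_mul_Gamma_eq_betaIntegral
      (s := (c:ℂ)) (t := (a:ℂ)) (by simpa using hc) (by simpa using ha)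
    have hβ : Complex.betaIntegral c a
        = Complex.Gamma c * Complex.Gamma a / Complex.Gamma ((c:ℂ) + a) := by
      rw [h, mul_comm, mul_div_assoc, div_self hΓne, mul_one]
    rw [hβ, hΓca, Complex.Gamma_ofReal, Complex.Gamma_ofReal]
    push_cast
    ring
  have h3 : (∫ x in (0:ℝ)..t, (x:ℂ) ^ ((c:ℂ) - 1) * ((t:ℂ) - x) ^ ((a:ℂ) - 1))
      = ((∫ τ in (0:ℝ)..t, (t - τ) ^ (a - 1) * τ ^ (c - 1) : ℝ) : ℂ) := by
    rw [← intervalIntegral.integral_ofReal]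
    rw [intervalIntegral.integral_of_le ht.le, intervalIntegral.integral_of_le ht.le]
    apply MeasureTheory.setIntegral_congr_fun measurableSet_Ioc
    intro x hx
    have hx0 : (0:ℝ) ≤ x := hx.1.le
    have htx : (0:ℝ) ≤ t - x := by linarith [hx.2]
    simp only [Complex.ofReal_mul]
    rw [show ((c:ℂ) - 1) = ((c - 1 : ℝ) : ℂ) by push_cast; ring,
      show ((a:ℂ) - 1) = ((a - 1 : ℝ) : ℂ) by push_cast; ring,
      show ((t:ℂ) - x) = ((t - x : ℝ) : ℂ) by push_cast; ring,
      ← Complex.ofReal_cpow hx0, ← Complex.ofReal_cpow htx]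
    ring
  have h4 : ((t:ℂ)) ^ ((c:ℂ) + a - 1) = ((t ^ (c + a - 1) : ℝ) : ℂ) := by
    rw [show ((c:ℂ) + a - 1) = ((c + a - 1 : ℝ) : ℂ) by push_cast; ring,
      ← Complex.ofReal_cpow ht.le]
  rw [h3, h2, h4] at h1
  have h5 : (∫ τ in (0:ℝ)..t, (t - τ) ^ (a - 1) * τ ^ (c - 1) : ℝ)
      = t ^ (c + a - 1) * (Real.Gamma c * Real.Gamma a / Real.Gamma (c + a)) := by
    exact_mod_cast h1
  rw [h5]
  rw [show c + a = a + c by ring]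
  ring


lemma integral_mlE {μ a c x t : ℝ} (hμ : 0 < μ) (ha : 0 < a) (hc : 0 < c) (ht : 0 < t) :
    ∫ τ in (0:ℝ)..t, (t - τ) ^ (a - 1) * (τ ^ (c - 1) * mlE μ c (x * τ ^ μ))
      = Real.Gamma a * (t ^ (a + c - 1) * mlE μ (a + c) (x * t ^ μ)) := by
  have hcn : ∀ n : ℕ, (0:ℝ) < μ * n + c := fun n => by positivity
  have hΓcn : ∀ n : ℕ, (0:ℝ) < Real.Gamma (μ * n + c) := fun n =>
    Real.Gamma_pos_of_pos (hcn n)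
  set F : ℕ → ℝ → ℝ :=
    fun n τ => (x ^ n / Real.Gamma (μ * n + c)) * ((t - τ) ^ (a - 1) * τ ^ (μ * n + c - 1))
    with hF
  -- pointwise identity of integrands on Ioc 0 t
  have hpt : ∀ τ ∈ Ioc (0:ℝ) t,
      (t - τ) ^ (a - 1) * (τ ^ (c - 1) * mlE μ c (x * τ ^ μ)) = ∑' n, F n τ := by
    intro τ hτ
    have hτ0 : (0:ℝ) < τ := hτ.1
    rw [mlE, ← tsum_mul_left, ← tsum_mul_left]
    congr 1 with n
    have h1 : (x * τ ^ μ) ^ n = x ^ n * τ ^ (μ * n) := by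
      rw [mul_pow, ← Real.rpow_natCast (τ ^ μ) n, ← Real.rpow_mul hτ0.le]
    have h2 : τ ^ (μ * n + c - 1) = τ ^ (μ * n) * τ ^ (c - 1) := by
      rw [← Real.rpow_add hτ0]; ring_nf
    simp only [hF]
    rw [h1, h2]
    field_simp
  -- integrability of each term
  have hInt : ∀ n : ℕ, IntegrableOn (F n) (Ioc (0:ℝ) t) volume := by
    intro n
    have := ((beta_integrable ha (hcn n) ht).const_mul
      (x ^ n / Real.Gamma (μ * n + c)))
    rw [intervalIntegrable_iff_integrableOn_Ioc_of_le ht.le] at this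
    exact this
  -- value of each integral
  have hval : ∀ n : ℕ, ∫ τ in Ioc (0:ℝ) t, F n τ
      = Real.Gamma a * (t ^ (a + c - 1) * ((x * t ^ μ) ^ n / Real.Gamma (μ * n + (a + c)))) := by
    intro n
    rw [← intervalIntegral.integral_of_le ht.le]
    simp only [hF]
    rw [intervalIntegral.integral_const_mul]
    rw [beta_eval ha (hcn n) ht]
    have h1 : (x * t ^ μ) ^ n = x ^ n * t ^ (μ * n) := by
      rw [mul_pow, ← Real.rpow_natCast (t ^ μ) n, ← Real.rpow_mul ht.le]
    have h2 : t ^ (a + (μ * n + c) - 1) = t ^ (μ * n) * t ^ (a + c - 1) := by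
      rw [← Real.rpow_add ht]; ring_nf
    have h3 : a + (μ * n + c) = μ * n + (a + c) := by ring
    rw [h2, h1]
    have hΓs : Real.Gamma (a + (μ * n + c)) = Real.Gamma (μ * n + (a + c)) := by rw [h3]
    rw [hΓs]
    field_simp
  -- norm integrals and their summability
  have hnorm : ∀ n : ℕ, ∫ τ in Ioc (0:ℝ) t, ‖F n τ‖
      = Real.Gamma a * (t ^ (a + c - 1) * ((|x| * t ^ μ) ^ n / Real.Gamma (μ * n + (a + c)))) := by
    intro n
    have heq : ∀ τ ∈ Ioc (0:ℝ) t, ‖F n τ‖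
        = (|x| ^ n / Real.Gamma (μ * n + c)) * ((t - τ) ^ (a - 1) * τ ^ (μ * n + c - 1)) := by
      intro τ hτ
      have hτ0 : (0:ℝ) < τ := hτ.1
      have htτ : (0:ℝ) ≤ t - τ := by linarith [hτ.2]
      simp only [hF]
      rw [Real.norm_eq_abs, abs_mul, abs_div, abs_pow,
        abs_of_pos (hΓcn n), abs_mul,
        abs_of_nonneg (Real.rpow_nonneg htτ _), abs_of_nonneg (Real.rpow_nonneg hτ0.le _)]
    rw [setIntegral_congr_fun measurableSet_Ioc heq]
    rw [← intervalIntegral.integral_of_le ht.le, intervalIntegral.integral_const_mul,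
      beta_eval ha (hcn n) ht]
    have h1 : (|x| * t ^ μ) ^ n = |x| ^ n * t ^ (μ * n) := by
      rw [mul_pow, ← Real.rpow_natCast (t ^ μ) n, ← Real.rpow_mul ht.le]
    have h2 : t ^ (a + (μ * n + c) - 1) = t ^ (μ * n) * t ^ (a + c - 1) := by
      rw [← Real.rpow_add ht]; ring_nf
    have hΓs : Real.Gamma (a + (μ * n + c)) = Real.Gamma (μ * n + (a + c)) := by
      rw [show a + (μ * n + c) = μ * n + (a + c) by ring]
    rw [h2, h1, hΓs]
    field_simp
  have hSum : Summable (fun n : ℕ => ∫ τ in Ioc (0:ℝ) t, ‖F n τ‖) := by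
    simp_rw [hnorm]
    apply Summable.mul_left
    apply Summable.mul_left
    have : Summable (fun n : ℕ => (|x| * t ^ μ) ^ n / Real.Gamma (μ * n + (a + c))) :=
      summable_ml_abs hμ (by linarith) (by positivity)
    exact this
  -- interchange
  rw [intervalIntegral.integral_of_le ht.le]
  rw [setIntegral_congr_fun measurableSet_Ioc hpt]
  rw [← integral_tsum_of_summable_integral_norm hInt hSum]
  rw [tsum_congr hval, tsum_mul_left, tsum_mul_left, mlE]


lemma continuous_mlE_comp {μ b x : ℝ} (hμ : 0 < μ) (hb : 0 < b) :
    Continuous (fun τ : ℝ => mlE μ b (x * τ ^ μ)) := by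
  have hpow : Continuous (fun τ : ℝ => τ ^ μ) :=
    continuous_iff_continuousAt.mpr fun τ => Real.continuousAt_rpow_const τ μ (Or.inr hμ.le)
  exact continuous_iff_continuousAt.mpr fun τ =>
    (mlE_continuousAt hμ hb _).comp ((continuous_const.mul hpow).continuousAt)

/-- Part (i): the fractional integral of order `(1-ν)(1-μ)`. -/
lemma rlI_part1 {μ ν ω : ℝ} (hν0 : 0 ≤ ν) (hν1 : ν ≤ 1) (hμ0 : 0 < μ) (hμ1 : μ < 1)
    {t : ℝ} (ht : 0 < t) :
    rlI ((1 - ν) * (1 - μ))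
      (fun s => s ^ (μ + ν * (1 - μ) - 1) * mlE μ (μ + ν * (1 - μ)) (-ω * s ^ μ)) t
      = mlE μ 1 (-ω * t ^ μ) := by
  have hβ : 0 < μ + ν * (1 - μ) := by nlinarith
  rcases eq_or_lt_of_le hν1 with h1 | h1
  · -- ν = 1
    subst h1
    have h0 : ((1:ℝ) - 1) * (1 - μ) = 0 := by ring
    simp only [rlI, if_pos h0]
    rw [show μ + 1 * (1 - μ) - 1 = 0 by ring, show μ + 1 * (1 - μ) = 1 by ring,
      Real.rpow_zero, one_mul]
  · have ha : 0 < (1 - ν) * (1 - μ) := by nlinarith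
    simp only [rlI, if_neg ha.ne']
    have key := integral_mlE (x := -ω) hμ0 ha hβ ht
    rw [key, show (1 - ν) * (1 - μ) + (μ + ν * (1 - μ)) = 1 by ring]
    rw [show (1:ℝ) - 1 = 0 by ring, Real.rpow_zero, one_mul]
    rw [← mul_assoc, inv_mul_cancel₀ (Real.Gamma_pos_of_pos ha).ne', one_mul]

/-- The derivative of `s ↦ E_{μ,1}(x s^μ)` at `t > 0`. -/
lemma hasDerivAt_mlE_comp {μ x t : ℝ} (hμ0 : 0 < μ) (ht : 0 < t) :
    HasDerivAt (fun s : ℝ => mlE μ 1 (x * s ^ μ))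
      (x * (t ^ (μ - 1) * mlE μ μ (x * t ^ μ))) t := by
  set h : ℝ → ℝ := fun τ => τ ^ (μ - 1) * mlE μ μ (x * τ ^ μ) with hh
  have hcont : Continuous (fun τ : ℝ => mlE μ μ (x * τ ^ μ)) :=
    continuous_mlE_comp hμ0 hμ0
  -- claim A
  have hA : ∀ s : ℝ, 0 < s → mlE μ 1 (x * s ^ μ) = 1 + x * ∫ τ in (0:ℝ)..s, h τ := by
    intro s hs
    have key := integral_mlE (a := 1) (c := μ) (x := x) hμ0 one_pos hμ0 hs
    have h0 : (∫ τ in (0:ℝ)..s, h τ)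
        = ∫ τ in (0:ℝ)..s, (s - τ) ^ ((1:ℝ) - 1) * (τ ^ (μ - 1) * mlE μ μ (x * τ ^ μ)) := by
      apply intervalIntegral.integral_congr
      intro τ _
      simp only [hh, show (1:ℝ) - 1 = 0 by ring, Real.rpow_zero, one_mul]
    rw [h0, key, Real.Gamma_one, one_mul, show (1:ℝ) + μ - 1 = μ by ring]
    rw [mlE_succ hμ0 one_pos, Real.Gamma_one, div_one]
    ring
  -- claim B
  have hInt : IntervalIntegrable h volume 0 t := by
    exact (intervalIntegral.intervalIntegrable_rpow' (by linarith)).mul_continuousOn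
      hcont.continuousOn
  have hmeas : StronglyMeasurableAtFilter h (𝓝 t) := by
    have hco : ContinuousOn h (Ioi (0:ℝ)) := by
      apply ContinuousOn.mul _ hcont.continuousOn
      intro τ hτ
      exact (Real.continuousAt_rpow_const τ (μ - 1) (Or.inl (ne_of_gt hτ))).continuousWithinAt
    exact hco.stronglyMeasurableAtFilter isOpen_Ioi t ht
  have hcontt : ContinuousAt h t := by
    exact ((Real.continuousAt_rpow_const t (μ - 1) (Or.inl ht.ne')).mul hcont.continuousAt)
  have hB : HasDerivAt (fun s => ∫ τ in (0:ℝ)..s, h τ) (h t) t :=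
    intervalIntegral.integral_hasDerivAt_right hInt hmeas hcontt
  have hC : HasDerivAt (fun s => 1 + x * ∫ τ in (0:ℝ)..s, h τ) (x * h t) t :=
    (hB.const_mul x).const_add 1
  apply hC.congr_of_eventuallyEq
  filter_upwards [isOpen_Ioi.mem_nhds ht] with s hs
  exact hA s hs



/-- Let `0 ≤ ν ≤ 1`, `0 < μ < 1`, `β := μ + ν(1-μ)`, `ω ∈ ℝ` and
`u(t) := t^(β-1) E_{μ,β}(-ω t^μ)`. Then (i) `I^{(1-ν)(1-μ)} u(t) = E_{μ,1}(-ω t^μ)` for `t > 0`,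
so `I^{(1-ν)(1-μ)} u(t) → 1` as `t → 0⁺`; and (ii) `D^{μ,ν} u(t) = -ω u(t)` for `t > 0`. -/
theorem hilferD_mlE (μ ν ω : ℝ) (hν0 : 0 ≤ ν) (hν1 : ν ≤ 1) (hμ0 : 0 < μ) (hμ1 : μ < 1) :
    (∀ t : ℝ, 0 < t →
      rlI ((1 - ν) * (1 - μ))
        (fun s => s ^ (μ + ν * (1 - μ) - 1) * mlE μ (μ + ν * (1 - μ)) (-ω * s ^ μ)) t
        = mlE μ 1 (-ω * t ^ μ)) ∧
    Filter.Tendsto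
      (rlI ((1 - ν) * (1 - μ))
        (fun s => s ^ (μ + ν * (1 - μ) - 1) * mlE μ (μ + ν * (1 - μ)) (-ω * s ^ μ)))
      (nhdsWithin 0 (Set.Ioi 0)) (nhds 1) ∧
    (∀ t : ℝ, 0 < t →
      hilferD μ ν
        (fun s => s ^ (μ + ν * (1 - μ) - 1) * mlE μ (μ + ν * (1 - μ)) (-ω * s ^ μ)) t
        = -ω * (t ^ (μ + ν * (1 - μ) - 1) * mlE μ (μ + ν * (1 - μ)) (-ω * t ^ μ))) := by
  refine ⟨fun t ht => rlI_part1 hν0 hν1 hμ0 hμ1 ht, ?_, ?_⟩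
  · have h0 : Tendsto (fun t : ℝ => -ω * t ^ μ) (𝓝[>] (0:ℝ)) (𝓝 0) := by
      have hc : ContinuousAt (fun t : ℝ => t ^ μ) 0 :=
        Real.continuousAt_rpow_const 0 μ (Or.inr hμ0.le)
      have h := (hc.tendsto.mono_left (nhdsWithin_le_nhds (s := Set.Ioi (0:ℝ)))).const_mul (-ω)
      rw [Real.zero_rpow hμ0.ne', mul_zero] at h
      exact h
    have h1 : Tendsto (fun t : ℝ => mlE μ 1 (-ω * t ^ μ)) (𝓝[>] (0:ℝ)) (𝓝 1) := by
      have hc := (mlE_continuousAt hμ0 one_pos 0).tendsto.comp h0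
      simp only [Function.comp_def] at hc
      rwa [mlE_zero, Real.Gamma_one, div_one] at hc
    refine h1.congr' ?_
    filter_upwards [self_mem_nhdsWithin] with t ht
    exact (rlI_part1 hν0 hν1 hμ0 hμ1 ht).symm
  · intro t ht
    have hder : ∀ s : ℝ, 0 < s →
        deriv (rlI ((1 - ν) * (1 - μ))
          (fun s => s ^ (μ + ν * (1 - μ) - 1) * mlE μ (μ + ν * (1 - μ)) (-ω * s ^ μ))) s
        = -ω * (s ^ (μ - 1) * mlE μ μ (-ω * s ^ μ)) := by
      intro s hs
      apply HasDerivAt.deriv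
      apply (hasDerivAt_mlE_comp hμ0 hs).congr_of_eventuallyEq
      filter_upwards [isOpen_Ioi.mem_nhds hs] with r hr
      exact rlI_part1 hν0 hν1 hμ0 hμ1 hr
    rw [hilferD]
    rcases eq_or_lt_of_le hν0 with h0 | h0
    · -- ν = 0
      subst h0
      have hz : (0:ℝ) * (1 - μ) = 0 := by ring
      rw [rlI, if_pos hz, hder t ht,
        show μ + 0 * (1 - μ) - 1 = μ - 1 by ring, show μ + 0 * (1 - μ) = μ by ring]
    · have ha2 : 0 < ν * (1 - μ) := by nlinarith
      rw [rlI, if_neg ha2.ne']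
      have hcongr : (∫ τ in (0:ℝ)..t, (t - τ) ^ (ν * (1 - μ) - 1) *
            deriv (rlI ((1 - ν) * (1 - μ))
              (fun s => s ^ (μ + ν * (1 - μ) - 1) * mlE μ (μ + ν * (1 - μ)) (-ω * s ^ μ))) τ)
          = ∫ τ in (0:ℝ)..t,
              -ω * ((t - τ) ^ (ν * (1 - μ) - 1) * (τ ^ (μ - 1) * mlE μ μ (-ω * τ ^ μ))) := by
        rw [intervalIntegral.integral_of_le ht.le, intervalIntegral.integral_of_le ht.le]
        apply setIntegral_congr_fun measurableSet_Ioc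
        intro τ hτ
        dsimp only
        rw [hder τ hτ.1]
        ring
      rw [hcongr, intervalIntegral.integral_const_mul, integral_mlE hμ0 ha2 hμ0 ht,
        show ν * (1 - μ) + μ = μ + ν * (1 - μ) by ring]
      field_simp [(Real.Gamma_pos_of_pos ha2).ne']
end

section
/- Let α > 0, β > 0, γ ∈ ℝ, and let λ be a real number with λ > |γ|^{1/α}. Then the Laplace transform of t ↦ t^{β−1} E_{α,β}(γ t^α) exists and ∫₀^∞ e^{−λ t} t^{β−1} E_{α,β}(γ t^α) dt = λ^{α−β}/(λ^α − γ). -/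
open MeasureTheory Set Filter Topology
open scoped ENNReal NNReal

/-- A `tsum` of integrable functions with summable integral norms is integrable. -/
lemma integrable_tsum_of_summable_norm' {α : Type*} [MeasurableSpace α] {μ : Measure α}
    {F : ℕ → α → ℝ} (hF_int : ∀ i, Integrable (F i) μ)
    (hF_sum : Summable fun i ↦ ∫ a, ‖F i a‖ ∂μ) :
    Integrable (fun a ↦ ∑' i, F i a) μ := by
  have h1 : ∀ i, ∫⁻ a, ‖F i a‖₊ ∂μ = ENNReal.ofReal (∫ a, ‖F i a‖ ∂μ) := fun i =>
    (MeasureTheory.ofReal_integral_norm_eq_lintegral_enorm (hF_int i)).symm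
  have key : ∑' i, ∫⁻ a, ‖F i a‖₊ ∂μ ≠ ⊤ := by
    rw [funext h1, ← ENNReal.ofReal_tsum_of_nonneg
      (fun i => integral_nonneg (fun a => norm_nonneg _)) hF_sum]
    exact ENNReal.ofReal_ne_top
  have hmeas : ∀ i, AEMeasurable (fun x => (‖F i x‖₊ : ℝ≥0∞)) μ := fun i =>
    (hF_int i).1.enorm
  have hlt : ∫⁻ a, ∑' i, (‖F i a‖₊ : ℝ≥0∞) ∂μ ≠ ⊤ := by rwa [lintegral_tsum hmeas]
  have hae : ∀ᵐ a ∂μ, Summable fun i => ‖F i a‖ := by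
    refine (ae_lt_top' (AEMeasurable.ennreal_tsum hmeas) hlt).mono fun x hx => ?_
    have := ENNReal.tsum_coe_ne_top_iff_summable_coe.mp hx.ne
    simpa [coe_nnnorm] using this
  constructor
  · refine aestronglyMeasurable_of_tendsto_ae atTop
      (f := fun n a => ∑ i ∈ Finset.range n, F i a)
      (fun n => Finset.aestronglyMeasurable_fun_sum _ (fun i _ => (hF_int i).1)) ?_
    filter_upwards [hae] with x hx
    exact hx.of_norm.hasSum.tendsto_sum_nat
  · rw [MeasureTheory.hasFiniteIntegral_def]
    refine lt_of_le_of_lt (lintegral_mono_ae ?_) hlt.lt_top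
    filter_upwards [hae] with x hx
    have hxn : Summable fun i => ‖F i x‖₊ := by
      rw [← NNReal.summable_coe]; simpa [coe_nnnorm] using hx
    calc (‖∑' i, F i x‖₊ : ℝ≥0∞) ≤ ((∑' i, ‖F i x‖₊ : ℝ≥0) : ℝ≥0∞) := by
          exact_mod_cast nnnorm_tsum_le hxn
      _ = ∑' i, (‖F i x‖₊ : ℝ≥0∞) := ENNReal.coe_tsum hxn

/-- For `α > 0`, `β > 0`, `γ ∈ ℝ` and real `λ > |γ|^(1/α)`, the Laplace transform of
`t ↦ t^(β-1) E_{α,β}(γ t^α)` exists and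
`∫₀^∞ e^(-λ t) t^(β-1) E_{α,β}(γ t^α) dt = λ^(α-β)/(λ^α - γ)`. -/
theorem laplace_mlE (a b g l : ℝ) (ha : 0 < a) (hb : 0 < b) (hl : |g| ^ (1 / a) < l) :
    MeasureTheory.IntegrableOn
      (fun t : ℝ => Real.exp (-l * t) * (t ^ (b - 1) * mlE a b (g * t ^ a))) (Set.Ioi 0) ∧
    ∫ t in Set.Ioi (0:ℝ), Real.exp (-l * t) * (t ^ (b - 1) * mlE a b (g * t ^ a))
      = l ^ (a - b) / (l ^ a - g) := by
  have ha' : a ≠ 0 := ha.ne'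
  have hl0 : 0 < l := lt_of_le_of_lt (Real.rpow_nonneg (abs_nonneg g) _) hl
  have hga : |g| < l ^ a := by
    have h := Real.rpow_lt_rpow (Real.rpow_nonneg (abs_nonneg g) _) hl ha
    rwa [← Real.rpow_mul (abs_nonneg g), one_div, inv_mul_cancel₀ ha', Real.rpow_one] at h
  have hla : (0:ℝ) < l ^ a := lt_of_le_of_lt (abs_nonneg g) hga
  have hsn : ∀ n : ℕ, (0:ℝ) < a * n + b := fun n => by positivity
  have hGamma : ∀ n : ℕ, (0:ℝ) < Real.Gamma (a * n + b) := fun n =>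
    Real.Gamma_pos_of_pos (hsn n)
  set G : ℕ → ℝ → ℝ :=
    fun n t => g ^ n / Real.Gamma (a * n + b) * (t ^ (a * n + b - 1) * Real.exp (-(l * t)))
    with hGdef
  -- each term is integrable on `Ioi 0`
  have hint : ∀ n : ℕ, IntegrableOn (G n) (Set.Ioi 0) := by
    intro n
    apply Integrable.const_mul
    have h := integrableOn_rpow_mul_exp_neg_mul_rpow (p := 1) (s := a * n + b - 1) (b := l)
      (by linarith [hsn n]) one_pos hl0
    refine h.congr_fun (fun x _ => ?_) measurableSet_Ioi
    simp only [Real.rpow_one, neg_mul]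
  -- value of each term's integral
  have hval : ∀ n : ℕ, ∫ t in Set.Ioi (0:ℝ), G n t = g ^ n * (1 / l) ^ (a * n + b) := by
    intro n
    rw [hGdef]
    rw [MeasureTheory.integral_const_mul, Real.integral_rpow_mul_exp_neg_mul_Ioi (hsn n) hl0]
    field_simp
  -- value of each term's norm integral
  have hnorm : ∀ n : ℕ, ∫ t in Set.Ioi (0:ℝ), ‖G n t‖ = |g| ^ n * (1 / l) ^ (a * n + b) := by
    intro n
    have heq : ∀ t ∈ Set.Ioi (0:ℝ), ‖G n t‖
        = |g| ^ n / Real.Gamma (a * n + b) * (t ^ (a * n + b - 1) * Real.exp (-(l * t))) := by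
      intro t ht
      have ht' : (0:ℝ) < t := ht
      rw [hGdef, Real.norm_eq_abs, abs_mul, abs_div, abs_pow, abs_of_pos (hGamma n),
        abs_of_pos (mul_pos (Real.rpow_pos_of_pos ht' _) (Real.exp_pos _))]
    rw [setIntegral_congr_fun measurableSet_Ioi heq, MeasureTheory.integral_const_mul,
      Real.integral_rpow_mul_exp_neg_mul_Ioi (hsn n) hl0]
    field_simp
  have hpow : ∀ n : ℕ, ((1 : ℝ) / l) ^ (a * n + b) = ((1 / l) ^ a) ^ n * (1 / l) ^ b := by
    intro n
    rw [Real.rpow_add (by positivity), Real.rpow_mul (by positivity), Real.rpow_natCast]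
  have hratio : |g| * (1 / l) ^ a < 1 := by
    rw [Real.div_rpow zero_le_one hl0.le, Real.one_rpow]
    rw [mul_one_div, div_lt_one hla]
    exact hga
  have hsum_norm : Summable fun n : ℕ => ∫ t in Set.Ioi (0:ℝ), ‖G n t‖ := by
    have : (fun n : ℕ => ∫ t in Set.Ioi (0:ℝ), ‖G n t‖)
        = fun n : ℕ => (|g| * (1 / l) ^ a) ^ n * (1 / l) ^ b := by
      funext n
      rw [hnorm n, hpow n, mul_pow]
      ring
    rw [this]
    exact (summable_geometric_of_lt_one (by positivity) hratio).mul_right _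
  -- pointwise identity on `Ioi 0`
  have heqF : ∀ t ∈ Set.Ioi (0:ℝ),
      Real.exp (-l * t) * (t ^ (b - 1) * mlE a b (g * t ^ a)) = ∑' n, G n t := by
    intro t ht
    have ht' : (0:ℝ) < t := ht
    have hterm : ∀ n : ℕ,
        Real.exp (-l * t) * (t ^ (b - 1) * ((g * t ^ a) ^ n / Real.Gamma (a * n + b)))
          = G n t := by
      intro n
      simp only [hGdef]
      have h1 : (t ^ a) ^ n = t ^ (a * (n:ℝ)) := by
        rw [Real.rpow_mul ht'.le, Real.rpow_natCast]
      have h2 : t ^ (a * (n:ℝ) + b - 1) = t ^ (b - 1) * t ^ (a * (n:ℝ)) := by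
        rw [← Real.rpow_add ht']
        ring_nf
      rw [mul_pow, h1, h2, neg_mul]
      ring
    rw [mlE]
    calc Real.exp (-l * t) * (t ^ (b - 1) * ∑' n : ℕ, (g * t ^ a) ^ n / Real.Gamma (a * n + b))
        = ∑' n : ℕ, Real.exp (-l * t)
            * (t ^ (b - 1) * ((g * t ^ a) ^ n / Real.Gamma (a * n + b))) := by
          rw [tsum_mul_left, tsum_mul_left]
      _ = ∑' n, G n t := by exact tsum_congr hterm
  have hnorm' : Summable fun n : ℕ => ∫ t, ‖G n t‖ ∂(volume.restrict (Set.Ioi (0:ℝ))) :=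
    hsum_norm
  constructor
  · refine (integrable_tsum_of_summable_norm' hint hnorm').congr ?_
    filter_upwards [ae_restrict_mem measurableSet_Ioi] with t ht
    exact (heqF t ht).symm
  · rw [setIntegral_congr_fun measurableSet_Ioi heqF,
      ← MeasureTheory.integral_tsum_of_summable_integral_norm hint hnorm']
    have : (fun n : ℕ => ∫ t in Set.Ioi (0:ℝ), G n t)
        = fun n : ℕ => (g * (1 / l) ^ a) ^ n * (1 / l) ^ b := by
      funext n
      rw [hval n, hpow n, mul_pow]
      ring
    rw [this, tsum_mul_right, tsum_geometric_of_norm_lt_one (by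
      rw [Real.norm_eq_abs, abs_mul, abs_of_pos (by positivity : (0:ℝ) < (1/l) ^ a)]
      exact hratio)]
    have hinva : ((1:ℝ) / l) ^ a = (l ^ a)⁻¹ := by
      rw [Real.div_rpow zero_le_one hl0.le, Real.one_rpow, one_div]
    have hinvb : ((1:ℝ) / l) ^ b = (l ^ b)⁻¹ := by
      rw [Real.div_rpow zero_le_one hl0.le, Real.one_rpow, one_div]
    have hsub : l ^ (a - b) = l ^ a / l ^ b := Real.rpow_sub hl0 a b
    have hne1 : l ^ a - g ≠ 0 := by
      have : g < l ^ a := lt_of_le_of_lt (le_abs_self g) hga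
      linarith
    have hne2 : (l:ℝ) ^ b ≠ 0 := ne_of_gt (by positivity)
    have hne3 : (l:ℝ) ^ a ≠ 0 := ne_of_gt hla
    rw [hinva, hinvb, hsub]
    have h1mg : 1 - g * (l ^ a)⁻¹ = (l ^ a - g) / l ^ a := by
      field_simp
    rw [h1mg]
    field_simp
end

section
/- Let 0 ≤ ν ≤ 1 and 0 < μ < 1. Let f : (0,∞) → ℝ be continuous, suppose the function t ↦ I^{(1−ν)(1−μ)} f(t) is differentiable on (0,∞) with continuous derivative g, suppose there exist constants M ≥ 0 and a ≥ 0 such that |f(t)| ≤ M e^{a t} and |g(t)| ≤ M e^{a t} for all t > 0, and suppose lim_{t→0⁺} I^{(1−ν)(1−μ)} f(t) = c. Then for every real λ > a, the Laplace transform of the Hilfer fractional derivative D^{μ,ν} f := I^{ν(1−μ)} g satisfies ∫₀^∞ e^{−λ t} (D^{μ,ν} f)(t) dt = λ^μ ∫₀^∞ e^{−λ t} f(t) dt − λ^{−ν(1−μ)} c. -/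
open MeasureTheory Set Filter

lemma lap_integrable {h : ℝ → ℝ} (hc : ContinuousOn h (Set.Ioi 0))
    {K a l : ℝ} (hb : ∀ t : ℝ, 0 < t → |h t| ≤ K * Real.exp (a * t)) (hl : a < l) :
    MeasureTheory.IntegrableOn (fun t => Real.exp (-l * t) * h t) (Set.Ioi 0) := by
  have meas : AEStronglyMeasurable (fun t => Real.exp (-l * t) * h t)
      (volume.restrict (Set.Ioi 0)) :=
    (((Real.continuous_exp.comp (continuous_const.mul continuous_id)).continuousOn).mul
      hc).aestronglyMeasurable measurableSet_Ioi
  refine Integrable.mono'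
    ((exp_neg_integrableOn_Ioi 0 (show (0:ℝ) < l - a by linarith)).const_mul K) meas ?_
  filter_upwards [MeasureTheory.ae_restrict_mem measurableSet_Ioi] with t ht
  have h1 : ‖Real.exp (-l * t) * h t‖ = Real.exp (-l * t) * |h t| := by
    rw [Real.norm_eq_abs, abs_mul, abs_of_pos (Real.exp_pos _)]
  rw [h1]
  calc Real.exp (-l * t) * |h t| ≤ Real.exp (-l * t) * (K * Real.exp (a * t)) :=
        mul_le_mul_of_nonneg_left (hb t ht) (Real.exp_pos _).le
    _ = K * (Real.exp (-l * t) * Real.exp (a * t)) := by ring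
    _ = K * Real.exp (-(l - a) * t) := by rw [← Real.exp_add]; ring_nf

lemma laplace_rlI {α : ℝ} (hα : 0 ≤ α) {h : ℝ → ℝ} (hc : ContinuousOn h (Set.Ioi 0))
    {K a l : ℝ} (hb : ∀ t : ℝ, 0 < t → |h t| ≤ K * Real.exp (a * t))
    (ha : 0 ≤ a) (hl : a < l) :
    ∫ t in Set.Ioi (0:ℝ), Real.exp (-l * t) * rlI α h t
      = l ^ (-α) * ∫ t in Set.Ioi (0:ℝ), Real.exp (-l * t) * h t := by
  have hl0 : (0:ℝ) < l := lt_of_le_of_lt ha hl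
  rcases eq_or_lt_of_le hα with h0 | hα
  · subst h0
    simp [rlI, Real.rpow_zero]
  · set F : ℝ → ℝ := fun τ => Real.exp (-l * τ) * h τ with hF
    set G : ℝ → ℝ := fun s => s ^ (α - 1) * Real.exp (-l * s) with hGdef
    have hFint : IntegrableOn F (Set.Ioi 0) := lap_integrable hc hb hl
    have hGint : IntegrableOn G (Set.Ioi 0) := by
      have h1 : IntegrableOn (fun x : ℝ => Real.exp (-(l * x)) * (l * x) ^ (α - 1))
          (Set.Ioi 0) := by
        have := (integrableOn_Ioi_comp_mul_left_iff
          (fun x : ℝ => Real.exp (-x) * x ^ (α - 1)) 0 hl0).2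
          (by simpa using Real.GammaIntegral_convergent hα)
        simpa using this
      have h2 := h1.const_mul (l ^ ((1:ℝ) - α))
      refine MeasureTheory.IntegrableOn.congr_fun h2 (fun x hx => ?_) measurableSet_Ioi
      have hx0 : (0:ℝ) < x := hx
      have hmr : ((l * x) : ℝ) ^ (α - 1) = l ^ (α - 1) * x ^ (α - 1) :=
        Real.mul_rpow hl0.le hx0.le
      have hone : l ^ ((1:ℝ) - α) * l ^ (α - 1) = 1 := by
        rw [← Real.rpow_add hl0]; norm_num
      show l ^ ((1:ℝ) - α) * (Real.exp (-(l * x)) * (l * x) ^ (α - 1)) = G x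
      rw [hmr]
      calc l ^ ((1:ℝ) - α) * (Real.exp (-(l * x)) * (l ^ (α - 1) * x ^ (α - 1)))
          = (l ^ ((1:ℝ) - α) * l ^ (α - 1)) * (Real.exp (-(l * x)) * x ^ (α - 1)) := by ring
        _ = Real.exp (-(l * x)) * x ^ (α - 1) := by rw [hone, one_mul]
        _ = x ^ (α - 1) * Real.exp (-l * x) := by rw [neg_mul]; ring
    have key : ∀ t ∈ Set.Ioi (0:ℝ), Real.exp (-l * t) * rlI α h t
        = (Real.Gamma α)⁻¹ * ∫ τ in (0:ℝ)..t, F τ * G (t - τ) := by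
      intro t _
      rw [rlI, if_neg hα.ne']
      rw [show Real.exp (-l * t) * ((Real.Gamma α)⁻¹ * ∫ τ in (0:ℝ)..t, (t - τ) ^ (α - 1) * h τ)
          = (Real.Gamma α)⁻¹ * (Real.exp (-l * t) * ∫ τ in (0:ℝ)..t, (t - τ) ^ (α - 1) * h τ)
          from by ring]
      congr 1
      rw [← intervalIntegral.integral_const_mul]
      apply intervalIntegral.integral_congr
      intro τ _
      have e : Real.exp (-l * τ) * Real.exp (-l * (t - τ)) = Real.exp (-l * t) := by
        rw [← Real.exp_add]; congr 1; ring
      calc Real.exp (-l * t) * ((t - τ) ^ (α - 1) * h τ)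
          = (Real.exp (-l * τ) * Real.exp (-l * (t - τ))) * ((t - τ) ^ (α - 1) * h τ) := by
            rw [e]
        _ = F τ * G (t - τ) := by simp only [hF, hGdef]; ring
    rw [setIntegral_congr_fun measurableSet_Ioi key, MeasureTheory.integral_const_mul]
    have conv := integral_posConvolution hFint hGint (ContinuousLinearMap.mul ℝ ℝ)
    simp only [ContinuousLinearMap.mul_apply'] at conv
    rw [conv]
    have hG : ∫ s in Set.Ioi (0:ℝ), G s = (1 / l) ^ α * Real.Gamma α := by
      rw [← Real.integral_rpow_mul_exp_neg_mul_Ioi hα hl0]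
      refine setIntegral_congr_fun measurableSet_Ioi (fun s _ => ?_)
      simp only [hGdef, neg_mul]
    rw [hG]
    have hΓ : Real.Gamma α ≠ 0 := (Real.Gamma_pos_of_pos hα).ne'
    have h1l : ((1:ℝ) / l) ^ α = l ^ (-α) := by
      rw [one_div, Real.inv_rpow hl0.le, ← Real.rpow_neg hl0.le]
    rw [h1l]
    field_simp

/-- Laplace transform of the Hilfer fractional derivative. Let `0 ≤ ν ≤ 1`, `0 < μ < 1`,
`f : (0,∞) → ℝ` continuous, suppose `t ↦ I^{(1-ν)(1-μ)} f(t)` is differentiable on `(0,∞)`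
with continuous derivative `g`, both `f` and `g` of exponential order (`|f(t)|, |g(t)| ≤ M e^(a t)`),
and `I^{(1-ν)(1-μ)} f(t) → c` as `t → 0⁺`. Then for every `λ > a`, the Laplace transform of
`D^{μ,ν} f = I^{ν(1-μ)} g` satisfies
`∫₀^∞ e^(-λ t) (D^{μ,ν} f)(t) dt = λ^μ ∫₀^∞ e^(-λ t) f(t) dt - λ^{-ν(1-μ)} c`. -/
theorem laplace_hilferD (μ ν : ℝ) (hν0 : 0 ≤ ν) (hν1 : ν ≤ 1) (hμ0 : 0 < μ) (hμ1 : μ < 1)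
    (f g : ℝ → ℝ) (c M a : ℝ) (hM : 0 ≤ M) (ha : 0 ≤ a)
    (hf : ContinuousOn f (Set.Ioi 0))
    (hg : ContinuousOn g (Set.Ioi 0))
    (hderiv : ∀ t : ℝ, 0 < t → HasDerivAt (rlI ((1 - ν) * (1 - μ)) f) (g t) t)
    (hfb : ∀ t : ℝ, 0 < t → |f t| ≤ M * Real.exp (a * t))
    (hgb : ∀ t : ℝ, 0 < t → |g t| ≤ M * Real.exp (a * t))
    (hlim : Filter.Tendsto (rlI ((1 - ν) * (1 - μ)) f) (nhdsWithin 0 (Set.Ioi 0)) (nhds c)) :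
    ∀ l : ℝ, a < l →
      ∫ t in Set.Ioi (0:ℝ), Real.exp (-l * t) * rlI (ν * (1 - μ)) g t
        = l ^ μ * (∫ t in Set.Ioi (0:ℝ), Real.exp (-l * t) * f t)
          - l ^ (-(ν * (1 - μ))) * c := by
  intro l hl
  have hl0 : (0:ℝ) < l := lt_of_le_of_lt ha hl
  set β : ℝ := (1 - ν) * (1 - μ) with hβdef
  set γ : ℝ := ν * (1 - μ) with hγdef
  have hβ : 0 ≤ β := mul_nonneg (by linarith) (by linarith)
  have hγ : 0 ≤ γ := mul_nonneg hν0 (by linarith)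
  set Φ : ℝ → ℝ := rlI β f with hΦdef
  have hΦcont : ContinuousOn Φ (Set.Ioi 0) :=
    fun x hx => ((hderiv x hx).continuousAt).continuousWithinAt
  -- Step 0 : bound on Φ
  have hΦb : ∀ t : ℝ, 0 < t → |Φ t| ≤ |c| + M * t * Real.exp (a * t) := by
    intro t ht
    set Φ' : ℝ → ℝ := fun s => if s ≤ 0 then c else Φ s with hΦ'def
    have hgint : IntervalIntegrable g volume 0 t := by
      rw [intervalIntegrable_iff_integrableOn_Ioc_of_le ht.le]
      have measg : AEStronglyMeasurable g (volume.restrict (Set.Ioc 0 t)) :=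
        (hg.mono Set.Ioc_subset_Ioi_self).aestronglyMeasurable measurableSet_Ioc
      refine Integrable.mono' (g := fun _ => M * Real.exp (a * t))
        (integrableOn_const measure_Ioc_lt_top.ne) measg ?_
      filter_upwards [MeasureTheory.ae_restrict_mem measurableSet_Ioc] with x hx
      calc ‖g x‖ ≤ M * Real.exp (a * x) := hgb x hx.1
        _ ≤ M * Real.exp (a * t) := by
            apply mul_le_mul_of_nonneg_left _ hM
            exact Real.exp_le_exp.2 (mul_le_mul_of_nonneg_left hx.2 ha)
    have ftc : ∫ s in (0:ℝ)..t, g s = Φ' t - Φ' 0 := by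
      apply intervalIntegral.integral_eq_sub_of_hasDeriv_right_of_le ht.le
      · intro x hx
        rcases eq_or_lt_of_le hx.1 with rfl | hx0
        · -- continuity at 0 within Icc
          have h1 : Tendsto Φ' (nhdsWithin 0 (Set.Ioi 0)) (nhds c) := by
            refine hlim.congr' ?_
            filter_upwards [self_mem_nhdsWithin] with s hs
            simp [hΦ'def, not_le.2 (Set.mem_Ioi.1 hs), hΦdef]
          have h2 : Tendsto Φ' (nhdsWithin 0 (Set.Ici 0)) (nhds c) := by
            rw [show (Set.Ici (0:ℝ)) = insert 0 (Set.Ioi 0) from Set.Ioi_insert.symm,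
              nhdsWithin_insert]
            rw [Filter.tendsto_sup]
            constructor
            · simpa [hΦ'def] using tendsto_pure_nhds Φ' 0
            · exact h1
          have : Φ' 0 = c := by simp [hΦ'def]
          rw [ContinuousWithinAt, this]
          exact h2.mono_left (nhdsWithin_mono _ (Set.Icc_subset_Ici_self))
        · have : ContinuousAt Φ' x := by
            have hev : Φ' =ᶠ[nhds x] Φ := by
              filter_upwards [Ioi_mem_nhds hx0] with s hs
              simp [hΦ'def, not_le.2 (Set.mem_Ioi.1 hs)]
            exact ((hderiv x hx0).continuousAt).congr hev.symm
          exact this.continuousWithinAt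
      · intro x hx
        have hev : Φ' =ᶠ[nhds x] Φ := by
          filter_upwards [Ioi_mem_nhds hx.1] with s hs
          simp [hΦ'def, not_le.2 (Set.mem_Ioi.1 hs)]
        exact (((hderiv x hx.1).congr_of_eventuallyEq hev).hasDerivWithinAt)
      · exact hgint
    have hΦ't : Φ' t = Φ t := by simp [hΦ'def, not_le.2 ht]
    have hΦ'0 : Φ' 0 = c := by simp [hΦ'def]
    have hint_bound : ‖∫ s in (0:ℝ)..t, g s‖ ≤ (M * Real.exp (a * t)) * |t - 0| := by
      apply intervalIntegral.norm_integral_le_of_norm_le_const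
      intro x hx
      rw [Set.uIoc_of_le ht.le] at hx
      calc ‖g x‖ ≤ M * Real.exp (a * x) := hgb x hx.1
        _ ≤ M * Real.exp (a * t) :=
          mul_le_mul_of_nonneg_left (Real.exp_le_exp.2 (mul_le_mul_of_nonneg_left hx.2 ha)) hM
    have : Φ t = c + ∫ s in (0:ℝ)..t, g s := by
      rw [ftc, hΦ't, hΦ'0]; ring
    rw [this]
    rw [Real.norm_eq_abs] at hint_bound
    have habs : |(∫ s in (0:ℝ)..t, g s)| ≤ M * Real.exp (a * t) * t := by
      have ht0 : |t - (0:ℝ)| = t := by rw [sub_zero, abs_of_pos ht]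
      calc |(∫ s in (0:ℝ)..t, g s)| ≤ M * Real.exp (a * t) * |t - 0| := hint_bound
        _ = M * Real.exp (a * t) * t := by rw [ht0]
    calc |c + ∫ s in (0:ℝ)..t, g s| ≤ |c| + |(∫ s in (0:ℝ)..t, g s)| := abs_add_le _ _
      _ ≤ |c| + M * t * Real.exp (a * t) := by
          rw [show M * t * Real.exp (a * t) = M * Real.exp (a * t) * t from by ring]
          linarith
  -- exponential bound on Φ
  set δ : ℝ := (l - a) / 2 with hδdef
  have hδ : 0 < δ := by simp only [hδdef]; linarith
  set a' : ℝ := (a + l) / 2 with ha'def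
  have ha'0 : 0 ≤ a' := by simp only [ha'def]; linarith
  have ha'l : a' < l := by simp only [ha'def]; linarith
  set K : ℝ := |c| + M / δ with hKdef
  have hΦb' : ∀ t : ℝ, 0 < t → |Φ t| ≤ K * Real.exp (a' * t) := by
    intro t ht
    have h1 : |Φ t| ≤ |c| + M * t * Real.exp (a * t) := hΦb t ht
    have h2 : (1:ℝ) ≤ Real.exp (a' * t) :=
      Real.one_le_exp (mul_nonneg ha'0 ht.le)
    have h3 : δ * t ≤ Real.exp (δ * t) := by
      have := Real.add_one_le_exp (δ * t)
      linarith
    have h4 : M * t * Real.exp (a * t) ≤ (M / δ) * Real.exp (a' * t) := by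
      have ht' : t ≤ Real.exp (δ * t) / δ := by
        rw [le_div_iff₀ hδ]; linarith [h3]
      have : M * t ≤ (M / δ) * Real.exp (δ * t) := by
        calc M * t ≤ M * (Real.exp (δ * t) / δ) :=
              mul_le_mul_of_nonneg_left ht' hM
          _ = (M / δ) * Real.exp (δ * t) := by ring
      calc M * t * Real.exp (a * t) ≤ (M / δ) * Real.exp (δ * t) * Real.exp (a * t) :=
            mul_le_mul_of_nonneg_right this (Real.exp_pos _).le
        _ = (M / δ) * Real.exp (a' * t) := by
            rw [mul_assoc, ← Real.exp_add]
            congr 2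
            simp only [hδdef, ha'def]; ring
    calc |Φ t| ≤ |c| + M * t * Real.exp (a * t) := h1
      _ ≤ |c| * Real.exp (a' * t) + (M / δ) * Real.exp (a' * t) := by
          have : |c| ≤ |c| * Real.exp (a' * t) := le_mul_of_one_le_right (abs_nonneg c) h2
          linarith
      _ = K * Real.exp (a' * t) := by rw [hKdef]; ring
  have hΦint : IntegrableOn (fun t => Real.exp (-l * t) * Φ t) (Set.Ioi 0) :=
    lap_integrable hΦcont hΦb' ha'l
  have hgint : IntegrableOn (fun t => Real.exp (-l * t) * g t) (Set.Ioi 0) :=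
    lap_integrable hg hgb hl
  -- Step: Laplace of derivative
  have step2 : ∫ t in Set.Ioi (0:ℝ), Real.exp (-l * t) * g t
      = l * (∫ t in Set.Ioi (0:ℝ), Real.exp (-l * t) * Φ t) - c := by
    set H : ℝ → ℝ := fun t => if t ≤ 0 then c else Real.exp (-l * t) * Φ t with hHdef
    set D : ℝ → ℝ := fun t => Real.exp (-l * t) * g t - l * (Real.exp (-l * t) * Φ t) with hDdef
    have hH0 : H 0 = c := by simp [hHdef]
    have hDint : IntegrableOn D (Set.Ioi 0) := hgint.sub (hΦint.const_mul l)
    have hHcont : ContinuousWithinAt H (Set.Ici 0) 0 := by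
      have h1 : Tendsto H (nhdsWithin 0 (Set.Ioi 0)) (nhds c) := by
        have hexp : Tendsto (fun t : ℝ => Real.exp (-l * t)) (nhdsWithin 0 (Set.Ioi 0))
            (nhds 1) := by
          have hce : Continuous (fun t : ℝ => Real.exp (-l * t)) :=
            Real.continuous_exp.comp (continuous_const.mul continuous_id)
          have : Tendsto (fun t : ℝ => Real.exp (-l * t)) (nhds 0) (nhds 1) := by
            simpa using hce.tendsto 0
          exact this.mono_left nhdsWithin_le_nhds
        have := hexp.mul hlim
        rw [one_mul] at this
        refine this.congr' ?_
        filter_upwards [self_mem_nhdsWithin] with s hs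
        simp [hHdef, not_le.2 (Set.mem_Ioi.1 hs), hΦdef]
      rw [ContinuousWithinAt, hH0]
      rw [show (Set.Ici (0:ℝ)) = insert 0 (Set.Ioi 0) from Set.Ioi_insert.symm,
        nhdsWithin_insert, Filter.tendsto_sup]
      constructor
      · simpa [hH0] using tendsto_pure_nhds H 0
      · exact h1
    have hHderiv : ∀ x ∈ Set.Ioi (0:ℝ), HasDerivAt H (D x) x := by
      intro x hx
      have hx0 : (0:ℝ) < x := hx
      have hexp : HasDerivAt (fun t : ℝ => Real.exp (-l * t)) (Real.exp (-l * x) * (-l)) x := by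
        have h1 : HasDerivAt (fun t : ℝ => -l * t) (-l) x := by
          simpa using (hasDerivAt_id x).const_mul (-l)
        exact (Real.hasDerivAt_exp (-l * x)).comp x h1
      have hmul := hexp.mul (hderiv x hx0)
      have hD : Real.exp (-l * x) * (-l) * Φ x + Real.exp (-l * x) * g x = D x := by
        simp only [hDdef]; ring
      rw [hD] at hmul
      have hev : (fun t => Real.exp (-l * t) * Φ t) =ᶠ[nhds x] H := by
        filter_upwards [Ioi_mem_nhds hx0] with s hs
        simp [hHdef, not_le.2 (Set.mem_Ioi.1 hs)]
      exact hmul.congr_of_eventuallyEq hev.symm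
    have hHtop : Tendsto H atTop (nhds 0) := by
      have hup : Tendsto (fun t : ℝ => K * Real.exp (-(l - a') * t)) atTop (nhds 0) := by
        have h1 : Tendsto (fun t : ℝ => (l - a') * t) atTop atTop :=
          Filter.Tendsto.const_mul_atTop (by linarith) tendsto_id
        have h2 : Tendsto (fun t : ℝ => Real.exp (-((l - a') * t))) atTop (nhds 0) :=
          Real.tendsto_exp_neg_atTop_nhds_zero.comp h1
        have h3 := h2.const_mul K
        rw [mul_zero] at h3
        refine h3.congr (fun t => ?_)
        rw [neg_mul]
      have hlo : Tendsto (fun t : ℝ => -(K * Real.exp (-(l - a') * t))) atTop (nhds 0) := by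
        simpa using hup.neg
      refine tendsto_of_tendsto_of_tendsto_of_le_of_le' hlo hup ?_ ?_
      · filter_upwards [Filter.eventually_gt_atTop 0] with t ht
        have hb : |H t| ≤ K * Real.exp (-(l - a') * t) := by
          have hHt : H t = Real.exp (-l * t) * Φ t := by simp [hHdef, not_le.2 ht]
          rw [hHt, abs_mul, abs_of_pos (Real.exp_pos _)]
          calc Real.exp (-l * t) * |Φ t| ≤ Real.exp (-l * t) * (K * Real.exp (a' * t)) :=
                mul_le_mul_of_nonneg_left (hΦb' t ht) (Real.exp_pos _).le
            _ = K * (Real.exp (-l * t) * Real.exp (a' * t)) := by ring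
            _ = K * Real.exp (-(l - a') * t) := by rw [← Real.exp_add]; ring_nf
        linarith [abs_le.1 hb]
      · filter_upwards [Filter.eventually_gt_atTop 0] with t ht
        have hb : |H t| ≤ K * Real.exp (-(l - a') * t) := by
          have hHt : H t = Real.exp (-l * t) * Φ t := by simp [hHdef, not_le.2 ht]
          rw [hHt, abs_mul, abs_of_pos (Real.exp_pos _)]
          calc Real.exp (-l * t) * |Φ t| ≤ Real.exp (-l * t) * (K * Real.exp (a' * t)) :=
                mul_le_mul_of_nonneg_left (hΦb' t ht) (Real.exp_pos _).le
            _ = K * (Real.exp (-l * t) * Real.exp (a' * t)) := by ring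
            _ = K * Real.exp (-(l - a') * t) := by rw [← Real.exp_add]; ring_nf
        linarith [abs_le.1 hb]
    have hFTC := MeasureTheory.integral_Ioi_of_hasDerivAt_of_tendsto hHcont hHderiv hDint hHtop
    rw [hH0] at hFTC
    have hsplit : ∫ x in Set.Ioi (0:ℝ), D x
        = (∫ t in Set.Ioi (0:ℝ), Real.exp (-l * t) * g t)
          - l * ∫ t in Set.Ioi (0:ℝ), Real.exp (-l * t) * Φ t := by
      rw [hDdef]
      rw [MeasureTheory.integral_sub hgint (hΦint.const_mul l),
        MeasureTheory.integral_const_mul]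
    rw [hsplit] at hFTC
    linarith [hFTC]
  -- Combine
  have step1 : ∫ t in Set.Ioi (0:ℝ), Real.exp (-l * t) * rlI γ g t
      = l ^ (-γ) * ∫ t in Set.Ioi (0:ℝ), Real.exp (-l * t) * g t :=
    laplace_rlI hγ hg hgb ha hl
  have step3 : ∫ t in Set.Ioi (0:ℝ), Real.exp (-l * t) * Φ t
      = l ^ (-β) * ∫ t in Set.Ioi (0:ℝ), Real.exp (-l * t) * f t :=
    laplace_rlI hβ hf hfb ha hl
  rw [step1, step2, step3]
  have hpow : l ^ (-γ) * (l * l ^ (-β)) = l ^ μ := by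
    rw [show l * l ^ (-β) = l ^ (1:ℝ) * l ^ (-β) from by rw [Real.rpow_one],
      ← Real.rpow_add hl0, ← Real.rpow_add hl0]
    congr 1
    simp only [hβdef, hγdef]; ring
  calc l ^ (-γ) * (l * (l ^ (-β) * ∫ t in Set.Ioi (0:ℝ), Real.exp (-l * t) * f t) - c)
      = (l ^ (-γ) * (l * l ^ (-β))) * (∫ t in Set.Ioi (0:ℝ), Real.exp (-l * t) * f t)
        - l ^ (-γ) * c := by ring
    _ = l ^ μ * (∫ t in Set.Ioi (0:ℝ), Real.exp (-l * t) * f t) - l ^ (-γ) * c := by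
        rw [hpow]
end

section
/- Let H be a Hilbert space, let (λₖ)_{k≥1} be a strictly increasing sequence of positive real numbers with λₖ → ∞, and let (wₖ)_{k≥1} be a sequence in H such that ∑ₖ ‖wₖ‖/(1+λₖ) < ∞. If ∑_{k=1}^∞ wₖ/(η+λₖ) = 0 in H for every real number η > 0, then wₖ = 0 for every k. -/
open Finset

/-- The interpolation points `cᵢ = 1 + 1/(i+1) ∈ (1, 2]`. -/
noncomputable def esCpt (i : ℕ) : ℝ := 1 + ((i : ℝ) + 1)⁻¹

lemma esCpt_gt_one (i : ℕ) : 1 < esCpt i := by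
  have : (0:ℝ) < ((i:ℝ)+1)⁻¹ := by positivity
  unfold esCpt; linarith

lemma esCpt_le_two (i : ℕ) : esCpt i ≤ 2 := by
  have : ((i:ℝ)+1)⁻¹ ≤ 1 := by
    rw [inv_le_one₀ (by positivity)]; norm_num
  unfold esCpt; linarith

lemma esCpt_strictAnti : StrictAnti esCpt := by
  intro i j hij
  unfold esCpt
  have : ((j:ℝ)+1)⁻¹ < ((i:ℝ)+1)⁻¹ := by
    gcongr
  linarith

/-- The products `∏_{i<n} (cᵢ + λₖ)`. -/
noncomputable def esP (l : ℕ → ℝ) (n k : ℕ) : ℝ := ∏ i ∈ Finset.range n, (esCpt i + l k)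

lemma esP_pos {l : ℕ → ℝ} (hpos : ∀ k, 0 < l k) (n k : ℕ) : 0 < esP l n k :=
  Finset.prod_pos fun i _ => by have := esCpt_gt_one i; have := hpos k; linarith

lemma esP_ge_one {l : ℕ → ℝ} (hpos : ∀ k, 0 < l k) (n k : ℕ) : 1 ≤ esP l n k := by
  unfold esP
  calc (1:ℝ) = ∏ _i ∈ Finset.range n, (1:ℝ) := by simp
    _ ≤ ∏ i ∈ Finset.range n, (esCpt i + l k) := by
        apply Finset.prod_le_prod
        · intro i _; norm_num
        · intro i _; have := esCpt_gt_one i; have := hpos k; linarith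

section Aux

variable {H : Type*} [NormedAddCommGroup H] [NormedSpace ℝ H] [CompleteSpace H]

lemma es_summable_norm (l : ℕ → ℝ) (hpos : ∀ k, 0 < l k)
    (w : ℕ → H) (hsum : Summable (fun k => ‖w k‖ / (1 + l k)))
    (n : ℕ) {η : ℝ} (hη : 0 < η) :
    Summable (fun k => ‖(((η + l k) * esP l n k)⁻¹) • w k‖) := by
  have hbound : ∀ k, ‖(((η + l k) * esP l n k)⁻¹) • w k‖
      ≤ (1 + η⁻¹) * (‖w k‖ / (1 + l k)) := by
    intro k
    have hlk := hpos k
    have hP := esP_ge_one hpos n k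
    have hPpos := esP_pos hpos n k
    have hη1 : (0:ℝ) < η + l k := by linarith
    have hmul : (0:ℝ) < (η + l k) * esP l n k := by positivity
    rw [norm_smul, Real.norm_eq_abs, abs_of_pos (inv_pos.mpr hmul)]
    have step1 : ((η + l k) * esP l n k)⁻¹ ≤ (η + l k)⁻¹ := by
      gcongr
      exact le_mul_of_one_le_right hη1.le hP
    have step2 : (η + l k)⁻¹ ≤ (1 + η⁻¹) / (1 + l k) := by
      rw [inv_le_iff_one_le_mul₀ hη1, div_mul_eq_mul_div, le_div_iff₀ (by linarith)]
      have hinv := mul_inv_cancel₀ (ne_of_gt hη)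
      have : (0:ℝ) < l k * η⁻¹ := by positivity
      nlinarith
    calc ((η + l k) * esP l n k)⁻¹ * ‖w k‖
        ≤ ((1 + η⁻¹) / (1 + l k)) * ‖w k‖ :=
          mul_le_mul_of_nonneg_right (step1.trans step2) (norm_nonneg _)
      _ = (1 + η⁻¹) * (‖w k‖ / (1 + l k)) := by ring
  exact Summable.of_nonneg_of_le (fun k => norm_nonneg _) hbound (hsum.mul_left _)

lemma es_summable (l : ℕ → ℝ) (hpos : ∀ k, 0 < l k)
    (w : ℕ → H) (hsum : Summable (fun k => ‖w k‖ / (1 + l k)))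
    (n : ℕ) {η : ℝ} (hη : 0 < η) :
    Summable (fun k => (((η + l k) * esP l n k)⁻¹) • w k) :=
  (es_summable_norm l hpos w hsum n hη).of_norm

/-- Main induction: divided differences of the vanishing series also vanish. -/
lemma es_tsum_zero (l : ℕ → ℝ) (hpos : ∀ k, 0 < l k)
    (w : ℕ → H) (hsum : Summable (fun k => ‖w k‖ / (1 + l k)))
    (hzero : ∀ η : ℝ, 0 < η → ∑' k : ℕ, (η + l k)⁻¹ • w k = 0) :
    ∀ n : ℕ, ∀ η : ℝ, 0 < η → (∀ i < n, η ≠ esCpt i) →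
      ∑' k : ℕ, (((η + l k) * esP l n k)⁻¹) • w k = 0 := by
  intro n
  induction n with
  | zero =>
    intro η hη _
    have h : ∀ k, (((η + l k) * esP l 0 k)⁻¹) • w k = (η + l k)⁻¹ • w k := by
      intro k; simp [esP]
    rw [tsum_congr h]
    exact hzero η hη
  | succ n IH =>
    intro η hη hne
    have hcn : 0 < esCpt n := lt_trans one_pos (esCpt_gt_one n)
    have hηcn : η ≠ esCpt n := hne n (Nat.lt_succ_self n)
    have hcne : ∀ i < n, esCpt n ≠ esCpt i := fun i hi =>
      ne_of_lt (esCpt_strictAnti hi)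
    have hS1 : HasSum (fun k => (((η + l k) * esP l n k)⁻¹) • w k) 0 := by
      have h := (es_summable l hpos w hsum n hη).hasSum
      rwa [IH η hη (fun i hi => hne i (hi.trans (Nat.lt_succ_self n)))] at h
    have hS2 : HasSum (fun k => (((esCpt n + l k) * esP l n k)⁻¹) • w k) 0 := by
      have h := (es_summable l hpos w hsum n hcn).hasSum
      rwa [IH (esCpt n) hcn hcne] at h
    have hS : HasSum (fun k => (esCpt n - η)⁻¹ •
        ((((η + l k) * esP l n k)⁻¹) • w k - (((esCpt n + l k) * esP l n k)⁻¹) • w k))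
        ((esCpt n - η)⁻¹ • ((0:H) - 0)) := (hS1.sub hS2).const_smul _
    have hkey : ∀ k, (esCpt n - η)⁻¹ •
        ((((η + l k) * esP l n k)⁻¹) • w k - (((esCpt n + l k) * esP l n k)⁻¹) • w k)
        = (((η + l k) * esP l (n+1) k)⁻¹) • w k := by
      intro k
      have hlk := hpos k
      have ha : η + l k ≠ 0 := by positivity
      have hb : esCpt n + l k ≠ 0 := by positivity
      have hq : esP l n k ≠ 0 := (esP_pos hpos n k).ne'
      have hd : esCpt n - η ≠ 0 := sub_ne_zero.mpr (Ne.symm hηcn)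
      rw [← sub_smul, smul_smul]
      congr 1
      have hP : esP l (n+1) k = esP l n k * (esCpt n + l k) := by
        rw [esP, Finset.prod_range_succ, esP]
      rw [hP]
      field_simp
      ring
    rw [tsum_congr (fun k => (hkey k).symm), hS.tsum_eq, sub_zero, smul_zero]

/-- The key lemma: the first coefficient vanishes. -/
lemma es_head_zero (l : ℕ → ℝ) (hmono : StrictMono l) (hpos : ∀ k, 0 < l k)
    (w : ℕ → H) (hsum : Summable (fun k => ‖w k‖ / (1 + l k)))
    (hzero : ∀ η : ℝ, 0 < η → ∑' k : ℕ, (η + l k)⁻¹ • w k = 0) :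
    w 0 = 0 := by
  set r : ℝ := (2 + l 0) / (2 + l 1) with hr
  have hl0 := hpos 0
  have hl01 : l 0 < l 1 := hmono Nat.zero_lt_one
  have hrpos : 0 < r := by apply div_pos <;> linarith
  have hrlt : r < 1 := by rw [hr, div_lt_one (by linarith)]; linarith
  set S : ℝ := ∑' k : ℕ, ‖w (k+1)‖ / (1 + l (k+1)) with hS
  set M : ℝ := (3 + l 0) * S with hM
  have hshift : Summable (fun k : ℕ => ‖w (k+1)‖ / (1 + l (k+1))) := by
    have := hsum.comp_injective (add_left_injective 1)
    simpa [Function.comp_def] using this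
  have hbound : ∀ n : ℕ, ‖w 0‖ ≤ r ^ n * M := by
    intro n
    have h3 : (0:ℝ) < 3 := by norm_num
    have hzero3 : ∑' k : ℕ, ((((3:ℝ) + l k) * esP l n k)⁻¹) • w k = 0 :=
      es_tsum_zero l hpos w hsum hzero n 3 h3
        (fun i _ h => by have := esCpt_le_two i; linarith)
    have hsummH := es_summable l hpos w hsum n h3
    have hsummN := es_summable_norm l hpos w hsum n h3
    have hsummN1 : Summable (fun k : ℕ => ‖((((3:ℝ) + l (k+1)) * esP l n (k+1))⁻¹) • w (k+1)‖) := by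
      have := hsummN.comp_injective (add_left_injective 1)
      simpa [Function.comp_def] using this
    have hsplit := Summable.tsum_eq_zero_add hsummH
    rw [hzero3] at hsplit
    have h0eq : ((((3:ℝ) + l 0) * esP l n 0)⁻¹) • w 0
        = - ∑' k : ℕ, ((((3:ℝ) + l (k+1)) * esP l n (k+1))⁻¹) • w (k+1) :=
      eq_neg_of_add_eq_zero_left hsplit.symm
    have hq0 : (0:ℝ) < esP l n 0 := esP_pos hpos n 0
    have hc0 : (0:ℝ) < (3 + l 0) * esP l n 0 := by positivity
    have hnorm0 : (((3:ℝ) + l 0) * esP l n 0)⁻¹ * ‖w 0‖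
        ≤ ∑' k : ℕ, ‖((((3:ℝ) + l (k+1)) * esP l n (k+1))⁻¹) • w (k+1)‖ := by
      have h1 : ‖((((3:ℝ) + l 0) * esP l n 0)⁻¹) • w 0‖
          ≤ ∑' k : ℕ, ‖((((3:ℝ) + l (k+1)) * esP l n (k+1))⁻¹) • w (k+1)‖ := by
        rw [h0eq, norm_neg]
        exact norm_tsum_le_tsum_norm hsummN1
      rwa [norm_smul, Real.norm_eq_abs, abs_of_pos (inv_pos.mpr hc0)] at h1
    -- termwise domination
    have hterm : ∀ k : ℕ,
        ‖((((3:ℝ) + l (k+1)) * esP l n (k+1))⁻¹) • w (k+1)‖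
        ≤ ((((3:ℝ) + l 0) * esP l n 0)⁻¹ * (r ^ n * (3 + l 0)))
            * (‖w (k+1)‖ / (1 + l (k+1))) := by
      intro k
      have hlk := hpos (k+1)
      have hl1k : l 1 ≤ l (k+1) := hmono.monotone (Nat.one_le_iff_ne_zero.mpr (Nat.succ_ne_zero k))
      have hqk : (0:ℝ) < esP l n (k+1) := esP_pos hpos n (k+1)
      have hck : (0:ℝ) < (3 + l (k+1)) * esP l n (k+1) := by positivity
      rw [norm_smul, Real.norm_eq_abs, abs_of_pos (inv_pos.mpr hck)]
      -- key product bound: esP l n 0 ≤ r^n * esP l n (k+1)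
      have hprod : esP l n 0 ≤ r ^ n * esP l n (k+1) := by
        have hrw : r ^ n * esP l n (k+1) = ∏ i ∈ Finset.range n, (r * (esCpt i + l (k+1))) := by
          rw [esP, Finset.prod_mul_distrib, Finset.prod_const, Finset.card_range]
        rw [hrw, esP]
        apply Finset.prod_le_prod
        · intro i _
          have := esCpt_gt_one i; linarith
        · intro i _
          have hci1 := esCpt_gt_one i
          have hci2 := esCpt_le_two i
          rw [hr, div_mul_eq_mul_div, le_div_iff₀ (by linarith)]
          nlinarith
      have hA : (esP l n (k+1))⁻¹ ≤ r ^ n * (esP l n 0)⁻¹ := by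
        have h2 : esP l n 0 * (esP l n (k+1))⁻¹ ≤ r ^ n := by
          rw [mul_inv_le_iff₀ hqk]; exact hprod
        calc (esP l n (k+1))⁻¹ = (esP l n 0)⁻¹ * (esP l n 0 * (esP l n (k+1))⁻¹) := by
              field_simp
          _ ≤ (esP l n 0)⁻¹ * r ^ n :=
              mul_le_mul_of_nonneg_left h2 (inv_nonneg.mpr hq0.le)
          _ = r ^ n * (esP l n 0)⁻¹ := mul_comm _ _
      have hB : ((3:ℝ) + l (k+1))⁻¹ ≤ (1 + l (k+1))⁻¹ := by
        gcongr <;> linarith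
      have hscal : (((3:ℝ) + l (k+1)) * esP l n (k+1))⁻¹
          ≤ (r ^ n * (esP l n 0)⁻¹) * (1 + l (k+1))⁻¹ := by
        rw [mul_inv]
        calc ((3:ℝ) + l (k+1))⁻¹ * (esP l n (k+1))⁻¹
            ≤ (1 + l (k+1))⁻¹ * (r ^ n * (esP l n 0)⁻¹) :=
              mul_le_mul hB hA (inv_nonneg.mpr hqk.le) (inv_nonneg.mpr (by linarith))
          _ = (r ^ n * (esP l n 0)⁻¹) * (1 + l (k+1))⁻¹ := mul_comm _ _
      calc (((3:ℝ) + l (k+1)) * esP l n (k+1))⁻¹ * ‖w (k+1)‖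
          ≤ ((r ^ n * (esP l n 0)⁻¹) * (1 + l (k+1))⁻¹) * ‖w (k+1)‖ :=
            mul_le_mul_of_nonneg_right hscal (norm_nonneg _)
        _ = ((((3:ℝ) + l 0) * esP l n 0)⁻¹ * (r ^ n * (3 + l 0)))
              * (‖w (k+1)‖ / (1 + l (k+1))) := by
            field_simp
    have htsum : (∑' k : ℕ, ‖((((3:ℝ) + l (k+1)) * esP l n (k+1))⁻¹) • w (k+1)‖)
        ≤ ((((3:ℝ) + l 0) * esP l n 0)⁻¹ * (r ^ n * (3 + l 0))) * S := by
      rw [hS, ← tsum_mul_left]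
      exact Summable.tsum_le_tsum hterm hsummN1 (hshift.mul_left _)
    have hfin : (((3:ℝ) + l 0) * esP l n 0)⁻¹ * ‖w 0‖
        ≤ ((((3:ℝ) + l 0) * esP l n 0)⁻¹ * (r ^ n * (3 + l 0))) * S :=
      hnorm0.trans htsum
    calc ‖w 0‖ = ((3 + l 0) * esP l n 0) * ((((3:ℝ) + l 0) * esP l n 0)⁻¹ * ‖w 0‖) := by
          field_simp
      _ ≤ ((3 + l 0) * esP l n 0) * (((((3:ℝ) + l 0) * esP l n 0)⁻¹ * (r ^ n * (3 + l 0))) * S) :=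
          mul_le_mul_of_nonneg_left hfin hc0.le
      _ = r ^ n * M := by rw [hM]; field_simp
  have hlim : Filter.Tendsto (fun n : ℕ => r ^ n * M) Filter.atTop (nhds 0) := by
    have h := tendsto_pow_atTop_nhds_zero_of_lt_one hrpos.le hrlt
    simpa using h.mul_const M
  have hle : ‖w 0‖ ≤ 0 := ge_of_tendsto hlim (Filter.Eventually.of_forall hbound)
  simpa using le_antisymm hle (norm_nonneg _)

end Aux

/-- Let `H` be a Hilbert space, `(λₖ)` a strictly increasing sequence of positive reals with
`λₖ → ∞`, and `(wₖ)` a sequence in `H` with `∑ₖ ‖wₖ‖/(1+λₖ) < ∞`. If `∑ₖ wₖ/(η+λₖ) = 0` in `H`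
for every `η > 0`, then `wₖ = 0` for every `k`. -/
theorem eigen_separation {H : Type*} [NormedAddCommGroup H] [InnerProductSpace ℝ H]
    [CompleteSpace H] (l : ℕ → ℝ) (hmono : StrictMono l) (hpos : ∀ k, 0 < l k)
    (htop : Filter.Tendsto l Filter.atTop Filter.atTop)
    (w : ℕ → H) (hsum : Summable (fun k => ‖w k‖ / (1 + l k)))
    (hzero : ∀ η : ℝ, 0 < η → ∑' k : ℕ, (η + l k)⁻¹ • w k = 0) :
    ∀ k, w k = 0 := by
  intro k
  induction k using Nat.strong_induction_on with
  | _ k IH =>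
  have hsum' : Summable (fun i : ℕ => ‖w (i + k)‖ / (1 + l (i + k))) := by
    have := hsum.comp_injective (add_left_injective k)
    simpa [Function.comp_def] using this
  have key := es_head_zero (fun i => l (i + k))
    (fun i j hij => hmono (by omega))
    (fun i => hpos (i + k))
    (fun i => w (i + k))
    hsum'
    ?_
  · simpa using key
  · intro η hη
    have hf : Summable (fun i : ℕ => (η + l i)⁻¹ • w i) := by
      have := es_summable (H := H) l hpos w hsum 0 hη
      simpa [esP] using this
    have hsplit := (Summable.sum_add_tsum_nat_add k hf).symm
    rw [hzero η hη] at hsplit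
    have hfin : ∑ i ∈ Finset.range k, (η + l i)⁻¹ • w i = 0 :=
      Finset.sum_eq_zero fun i hi => by rw [IH i (Finset.mem_range.mp hi), smul_zero]
    rw [hfin, zero_add] at hsplit
    exact hsplit.symm
end
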